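/- arXiv:2111.03526 — 9 statements merged into one kernel-verified Lean document; each statement's English description precedes it below -/
import Mathlib

section
/- Let m > r be positive integers, A ∈ ℤ^{r×m}, and b ∈ ℤ^r such that S(A,b) ≠ ∅. Then for every n ∈ ℕ, |S_0(A,b) ∩ [n]^m| ≤ |S(A,b) ∩ [n]^m| ≤ n^{m − rk(A)}. Moreover, if A is positive, then there exist a constant c > 0 and n_0 such that for all n ≥ n_0, |S_0(A,b) ∩ [n]^m| ≥ c · n^{m − rk(A)}. -/
open Matrix Finset MeasureTheory ProbabilityTheory Filter Topology
open scoped BoundedContinuousFunction NNReal ENNReal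

attribute [local instance] Classical.propDecidable

noncomputable section

/-- The rank over `ℚ` of an integer matrix. -/
def rkZ {α β : Type*} [Fintype α] [Fintype β] (A : Matrix α β ℤ) : ℕ :=
  (A.map (Int.cast : ℤ → ℚ)).rank

/-- The submatrix consisting of the columns indexed by `Q`. -/
def colSub {α β : Type*} (A : Matrix α β ℤ) (Q : Finset β) : Matrix α Q ℤ :=
  A.submatrix id (fun j => (j : β))

/-- A matrix is positive if `Ax = 0` has a solution with all entries positive and,
for every pair of distinct indices, a solution whose corresponding entries differ. -/
def IsPositiveMat {α β : Type*} [Fintype β] (A : Matrix α β ℤ) : Prop :=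
  (∃ x : β → ℤ, A.mulVec x = 0 ∧ ∀ j, 0 < x j) ∧
    ∀ i j : β, i ≠ j → ∃ x : β → ℤ, A.mulVec x = 0 ∧ x i ≠ x j

/-- A matrix is abundant if it has positive rank and removing at most two columns
does not change the rank. -/
def IsAbundantMat {α β : Type*} [Fintype α] [Fintype β] (A : Matrix α β ℤ) : Prop :=
  0 < rkZ A ∧ ∀ Q : Finset β, Fintype.card β - 2 ≤ Q.card → rkZ (colSub A Q) = rkZ A

/-- `r_Q(A) = rk(A) - rk(A^{complement of Q})`. -/
def rQ {α β : Type*} [Fintype α] [Fintype β] (A : Matrix α β ℤ) (Q : Finset β) : ℕ :=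
  rkZ A - rkZ (colSub A Qᶜ)

/-- The density `c(A) = max over nonempty Q of |Q|/(|Q| - r_Q(A))`. -/
def matDensity {α β : Type*} [Fintype α] [Fintype β] (A : Matrix α β ℤ) : ℝ :=
  sSup {x : ℝ | ∃ Q : Finset β, Q.Nonempty ∧
    x = (Q.card : ℝ) / ((Q.card : ℝ) - (rQ A Q : ℝ))}

/-- The matrix `A_𝔭` obtained by summing columns over the classes of a partition
(realised as a setoid); columns are indexed by the classes. -/
def contract {α β : Type*} [Fintype β] (A : Matrix α β ℤ) (s : Setoid β) :
    Matrix α (Quotient s) ℤ :=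
  fun i c => ∑ j ∈ Finset.univ.filter (fun j => Quotient.mk s j = c), A i j

/-- `𝔓(A)`: partitions whose contracted matrix has full rank `rk(A)`. -/
def partitionFamily {α β : Type*} [Fintype α] [Fintype β] (A : Matrix α β ℤ) :
    Set (Setoid β) :=
  {s | rkZ (contract A s) = rkZ A}

/-- The partition of `β` into singletons, as a setoid. -/
def singletonSetoid (β : Type*) : Setoid β := ⟨Eq, eq_equivalence⟩

/-- Proper solutions: solutions with pairwise distinct coordinates. -/
def properSols {α β : Type*} [Fintype β] (A : Matrix α β ℤ) (b : α → ℤ) : Set (β → ℤ) :=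
  {x | A.mulVec x = b ∧ Function.Injective x}

/-- Type-`𝔓` solutions: solutions whose induced partition (the kernel setoid) lies in `𝔓`. -/
def typeSols {α β : Type*} [Fintype β] (A : Matrix α β ℤ) (b : α → ℤ)
    (P : Set (Setoid β)) : Set (β → ℤ) :=
  {x | A.mulVec x = b ∧ Setoid.ker x ∈ P}

/-- The Bernoulli measure on `Bool` with parameter `p`. -/
def bern (p : ℝ≥0) (h : p ≤ 1) : Measure Bool :=
  (PMF.bernoulli p (by exact_mod_cast h)).toMeasure

/-- The product Bernoulli measure on `Fin n → Bool`, modelling the random set `[n]_p`. -/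
def prodBern (n : ℕ) (p : ℝ≥0) (h : p ≤ 1) : Measure (Fin n → Bool) :=
  Measure.pi fun _ => bern p h

/-- An integer `a` is a selected element of `[n]_p` in outcome `ω`. -/
def selected {n : ℕ} (ω : Fin n → Bool) (a : ℤ) : Prop :=
  ∃ i : Fin n, a = (i : ℕ) + 1 ∧ ω i = true

/-- The number of solutions in `S` whose entries all lie in the random set `[n]_p`. -/
def solCount {β : Type*} (S : Set (β → ℤ)) (n : ℕ) (ω : Fin n → Bool) : ℕ :=
  Nat.card {x : β → ℤ // x ∈ S ∧ ∀ j, selected ω (x j)}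

end

section SolsAuxSection



namespace SolsAux

variable {r m : ℕ}

/-- coordinatewise cast to ℚ -/
def castv {m : ℕ} (x : Fin m → ℤ) : Fin m → ℚ := fun j => (x j : ℚ)

lemma mulVec_castv (A : Matrix (Fin r) (Fin m) ℤ) (x : Fin m → ℤ) :
    (A.map ((↑) : ℤ → ℚ)).mulVec (castv x) = castv (A.mulVec x) := by
  funext i
  simp only [Matrix.mulVec, dotProduct, Matrix.map_apply, castv]
  push_cast
  rfl

lemma castv_eq_zero {x : Fin m → ℤ} (h : castv x = 0) : x = 0 := by
  funext j
  have := congrFun h j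
  simpa [castv] using this

/-- clear denominators -/
lemma exists_int_scale (w : Fin m → ℚ) :
    ∃ (N : ℕ) (u : Fin m → ℤ), 0 < N ∧ ∀ j, (u j : ℚ) = (N : ℚ) * w j := by
  classical
  set N : ℕ := ∏ j, (w j).den with hN
  have hNpos : 0 < N := Finset.prod_pos fun j _ => (w j).pos
  refine ⟨N, fun j => (N / (w j).den : ℕ) * (w j).num, hNpos, fun j => ?_⟩
  have hdvd : (w j).den ∣ N := Finset.dvd_prod_of_mem _ (Finset.mem_univ j)
  have hdiv : (N / (w j).den) * (w j).den = N := Nat.div_mul_cancel hdvd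
  have hnum : ((w j).num : ℚ) = (w j).den * w j := by
    exact (Rat.den_mul_eq_num (w j)).symm
  set t : ℕ := N / (w j).den with ht
  calc (((t : ℕ) * (w j).num : ℤ) : ℚ)
      = (t : ℚ) * ((w j).num : ℚ) := by rw [Int.cast_mul]; norm_cast
    _ = (t : ℚ) * (((w j).den : ℚ) * w j) := by rw [hnum]
    _ = ((t * (w j).den : ℕ) : ℚ) * w j := by rw [Nat.cast_mul]; ring
    _ = (N : ℚ) * w j := by rw [hdiv]

end SolsAux

namespace SolsAux

variable {r m : ℕ}

lemma finrank_ker (A : Matrix (Fin r) (Fin m) ℤ) :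
    Module.finrank ℚ (LinearMap.ker (A.map ((↑) : ℤ → ℚ)).mulVecLin) =
      m - (A.map ((↑) : ℤ → ℚ)).rank := by
  set Aq := A.map ((↑) : ℤ → ℚ)
  have h := LinearMap.finrank_range_add_finrank_ker Aq.mulVecLin
  rw [Module.finrank_fin_fun] at h
  have hrk : Aq.rank = Module.finrank ℚ (LinearMap.range Aq.mulVecLin) := rfl
  omega

lemma exists_coords (A : Matrix (Fin r) (Fin m) ℤ) :
    ∃ J : Finset (Fin m), J.card = m - (A.map ((↑) : ℤ → ℚ)).rank ∧
      ∀ z : Fin m → ℚ, (A.map ((↑) : ℤ → ℚ)).mulVec z = 0 → (∀ j ∈ J, z j = 0) → z = 0 := by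
  classical
  set Aq := A.map ((↑) : ℤ → ℚ) with hAq
  set K := LinearMap.ker Aq.mulVecLin with hK
  set d := Module.finrank ℚ K with hd
  have hdm : d = m - Aq.rank := finrank_ker A
  let w : Module.Basis (Fin d) ℚ K := Module.finBasis ℚ K
  let col : Fin m → (Fin d → ℚ) := fun j i => (w i : Fin m → ℚ) j
  have hrows : LinearIndependent ℚ (fun i => ((w i : Fin m → ℚ))) :=
    w.linearIndependent.map' K.subtype K.ker_subtype
  let Bm : Matrix (Fin d) (Fin m) ℚ := fun i j => (w i : Fin m → ℚ) j
  have hBt : Bmᵀ.rank = d := by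
    rw [Matrix.rank_eq_finrank_span_cols]
    have : Set.range (fun i => (Bm i : Fin m → ℚ)) = Set.range (fun i => ((w i : Fin m → ℚ))) := rfl
    rw [show (Set.range Bmᵀ.col) = Set.range (fun i => ((w i : Fin m → ℚ))) from rfl]
    rw [finrank_span_eq_card hrows, Fintype.card_fin]
  have hB : Bm.rank = d := by rw [← Matrix.rank_transpose]; exact hBt
  have hcols : Module.finrank ℚ (Submodule.span ℚ (Set.range col)) = d := by
    have := Matrix.rank_eq_finrank_span_cols Bm
    rw [hB] at this
    rw [show Set.range col = Set.range Bm.col from rfl]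
    omega
  have hspan_top : Submodule.span ℚ (Set.range col) = ⊤ :=
    Submodule.eq_top_of_finrank_eq (by rw [hcols, Module.finrank_fin_fun])
  obtain ⟨s, hs_sub, hs_span, hs_li⟩ := exists_linearIndependent ℚ (Set.range col)
  have hsfin : s.Finite := (Set.finite_range col).subset hs_sub
  haveI : Fintype s := hsfin.fintype
  have hstop : Submodule.span ℚ s = ⊤ := by rw [hs_span, hspan_top]
  have hcard : s.toFinset.card = d := by
    have h1 := finrank_span_set_eq_card hs_li
    rw [hstop, finrank_top, Module.finrank_fin_fun] at h1
    omega
  let f : s → Fin m := fun y => (hs_sub y.2).choose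
  have hf : ∀ y : s, col (f y) = (y : Fin d → ℚ) := fun y => (hs_sub y.2).choose_spec
  have hfinj : Function.Injective f := by
    intro y y' h
    have := hf y
    rw [h, hf y'] at this
    exact Subtype.ext this.symm
  refine ⟨Finset.univ.image f, ?_, ?_⟩
  · rw [Finset.card_image_of_injective _ hfinj, Finset.card_univ, ← Set.toFinset_card, hcard, hdm]
  · intro z hz hzJ
    have zmem : z ∈ K := by
      rw [hK, LinearMap.mem_ker, Matrix.mulVecLin_apply, hz]
    set c := w.repr ⟨z, zmem⟩ with hc
    have hzsum : ∑ i, c i • (w i : Fin m → ℚ) = z := by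
      have h1 : (∑ i, c i • w i : K) = ⟨z, zmem⟩ := w.sum_repr ⟨z, zmem⟩
      have h2 := congrArg (K.subtype) h1
      rw [map_sum] at h2
      simpa using h2
    let φ : (Fin d → ℚ) →ₗ[ℚ] ℚ := ∑ i, c i • LinearMap.proj i
    have hφ : ∀ y : Fin d → ℚ, φ y = ∑ i, c i * y i := by
      intro y
      simp [φ, LinearMap.sum_apply, LinearMap.proj_apply, smul_eq_mul]
    have hφs : Set.EqOn φ (0 : (Fin d → ℚ) →ₗ[ℚ] ℚ) s := by
      intro y hy
      have hyc : col (f ⟨y, hy⟩) = y := hf ⟨y, hy⟩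
      have hJ : f ⟨y, hy⟩ ∈ Finset.univ.image f := Finset.mem_image_of_mem f (Finset.mem_univ _)
      have hz0 : z (f ⟨y, hy⟩) = 0 := hzJ _ hJ
      have := congrFun hzsum (f ⟨y, hy⟩)
      rw [Finset.sum_apply] at this
      simp only [Pi.smul_apply, smul_eq_mul] at this
      rw [LinearMap.zero_apply, hφ, ← hyc]
      exact this.trans hz0
    have hφ0 : φ = 0 := LinearMap.ext_on hstop hφs
    have hc0 : ∀ i, c i = 0 := by
      intro i
      have h1 : φ (Pi.single i 1) = c i := by
        rw [hφ]
        simp [Pi.single_apply, mul_ite]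
      rw [hφ0] at h1
      simpa using h1.symm
    rw [← hzsum]
    simp [hc0]

end SolsAux

namespace SolsAux

variable {r m : ℕ}

lemma finite_box (P : (Fin m → ℤ) → Prop) (n : ℕ) :
    Finite {x : Fin m → ℤ // P x ∧ ∀ j, 1 ≤ x j ∧ x j ≤ (n : ℤ)} := by
  classical
  apply Finite.of_injective
    (fun x (j : Fin m) => (⟨x.1 j, Finset.mem_Icc.2 (x.2.2 j)⟩ : (Finset.Icc (1:ℤ) (n:ℤ))))
  intro x y h
  apply Subtype.ext
  funext j
  exact congrArg Subtype.val (congrFun h j)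

lemma card_box_le (A : Matrix (Fin r) (Fin m) ℤ) (b : Fin r → ℤ) (n : ℕ) :
    Nat.card {x : Fin m → ℤ // A.mulVec x = b ∧ ∀ j, 1 ≤ x j ∧ x j ≤ (n : ℤ)} ≤
      n ^ (m - (A.map ((↑) : ℤ → ℚ)).rank) := by
  classical
  obtain ⟨J, hJcard, hJ⟩ := exists_coords A
  set Aq := A.map ((↑) : ℤ → ℚ) with hAq
  let F : {x : Fin m → ℤ // A.mulVec x = b ∧ ∀ j, 1 ≤ x j ∧ x j ≤ (n : ℤ)} →
      (J → (Finset.Icc (1:ℤ) (n:ℤ))) :=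
    fun x j => ⟨x.1 j, Finset.mem_Icc.2 (x.2.2 j)⟩
  have hinj : Function.Injective F := by
    intro x y h
    apply Subtype.ext
    have hxy : ∀ j ∈ J, x.1 j = y.1 j := fun j hj =>
      congrArg Subtype.val (congrFun h ⟨j, hj⟩)
    set z : Fin m → ℚ := fun j => (x.1 j : ℚ) - (y.1 j : ℚ) with hzdef
    have hz : Aq.mulVec z = 0 := by
      have h1 : z = castv x.1 - castv y.1 := rfl
      rw [h1, Matrix.mulVec_sub, mulVec_castv, mulVec_castv, x.2.1, y.2.1, sub_self]
    have hz0 : ∀ j ∈ J, z j = 0 := fun j hj => by simp [hzdef, hxy j hj]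
    have hzz := hJ z hz hz0
    funext j
    have hj := congrFun hzz j
    simp only [hzdef, Pi.zero_apply, sub_eq_zero] at hj
    exact_mod_cast hj
  have hle := Nat.card_le_card_of_injective F hinj
  have hcard : Nat.card (J → (Finset.Icc (1:ℤ) (n:ℤ))) = n ^ (m - Aq.rank) := by
    rw [Nat.card_eq_fintype_card, Fintype.card_fun, Fintype.card_coe, Fintype.card_coe,
      Int.card_Icc, hJcard]
    norm_num
  rw [hcard] at hle
  exact hle

end SolsAux

namespace SolsAux

variable {r m : ℕ}

lemma castv_mem_ker {A : Matrix (Fin r) (Fin m) ℤ} {x : Fin m → ℤ} (hx : A.mulVec x = 0) :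
    (A.map ((↑) : ℤ → ℚ)).mulVec (castv x) = 0 := by
  rw [mulVec_castv, hx]
  funext i
  simp [castv]

lemma exists_kernel_family (A : Matrix (Fin r) (Fin m) ℤ)
    (hpair : ∀ i j : Fin m, i ≠ j → ∃ x : Fin m → ℤ, A.mulVec x = 0 ∧ x i ≠ x j) :
    ∃ u : Fin (m - (A.map ((↑) : ℤ → ℚ)).rank) → (Fin m → ℤ),
      (∀ i, A.mulVec (u i) = 0) ∧
      LinearIndependent ℚ (fun i => castv (u i)) ∧
      (∀ j1 j2 : Fin m, j1 ≠ j2 → ∃ i, u i j1 ≠ u i j2) := by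
  classical
  set Aq := A.map ((↑) : ℤ → ℚ) with hAq
  set K := LinearMap.ker Aq.mulVecLin with hK
  set d := Module.finrank ℚ K with hd
  have hdm : d = m - Aq.rank := finrank_ker A
  let w : Module.Basis (Fin d) ℚ K := Module.finBasis ℚ K
  have h := fun i : Fin d => exists_int_scale ((w i : Fin m → ℚ))
  choose N u' hN hu using h
  have hcast : ∀ i, castv (u' i) = (N i : ℚ) • ((w i : Fin m → ℚ)) := by
    intro i; funext j; simp [castv, hu i j]
  -- (a)
  have ha : ∀ i, A.mulVec (u' i) = 0 := by
    intro i
    have h1 : Aq.mulVec (castv (u' i)) = 0 := by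
      rw [hcast i, Matrix.mulVec_smul]
      have h2 : Aq.mulVec ((w i : Fin m → ℚ)) = 0 := by
        have h3 : (w i : Fin m → ℚ) ∈ LinearMap.ker Aq.mulVecLin := (w i).2
        rwa [LinearMap.mem_ker, Matrix.mulVecLin_apply] at h3
      rw [h2, smul_zero]
    rw [mulVec_castv] at h1
    apply castv_eq_zero h1
  -- (b)
  have hrows : LinearIndependent ℚ (fun i => ((w i : Fin m → ℚ))) :=
    w.linearIndependent.map' K.subtype K.ker_subtype
  have hb : LinearIndependent ℚ (fun i => castv (u' i)) := by
    let ν : Fin d → ℚˣ := fun i => Units.mk0 ((N i : ℚ)) (by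
      exact_mod_cast Nat.cast_ne_zero.2 (hN i).ne')
    have h1 := hrows.units_smul ν
    have h2 : (ν • fun i => ((w i : Fin m → ℚ))) = fun i => castv (u' i) := by
      funext i
      rw [hcast i]
      rfl
    rwa [h2] at h1
  -- span = K
  have hmem : ∀ i, castv (u' i) ∈ K := by
    intro i
    rw [hK, LinearMap.mem_ker, Matrix.mulVecLin_apply]
    exact castv_mem_ker (ha i)
  have hle : Submodule.span ℚ (Set.range (fun i => castv (u' i))) ≤ K := by
    rw [Submodule.span_le]
    rintro _ ⟨i, rfl⟩
    exact hmem i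
  have hfr : Module.finrank ℚ (Submodule.span ℚ (Set.range (fun i => castv (u' i)))) = d := by
    rw [finrank_span_eq_card hb, Fintype.card_fin]
  have hspaneq : Submodule.span ℚ (Set.range (fun i => castv (u' i))) = K :=
    Submodule.eq_of_le_of_finrank_le hle (by rw [hfr])
  -- (c)
  have hc : ∀ j1 j2 : Fin m, j1 ≠ j2 → ∃ i, u' i j1 ≠ u' i j2 := by
    intro j1 j2 hne
    by_contra hcon
    push_neg at hcon
    obtain ⟨x, hx0, hxne⟩ := hpair j1 j2 hne
    have hxK : castv x ∈ K := by
      rw [hK, LinearMap.mem_ker, Matrix.mulVecLin_apply]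
      exact castv_mem_ker hx0
    let ψ : (Fin m → ℚ) →ₗ[ℚ] ℚ :=
      (LinearMap.proj j1 : (Fin m → ℚ) →ₗ[ℚ] ℚ) - (LinearMap.proj j2 : (Fin m → ℚ) →ₗ[ℚ] ℚ)
    have hψker : K ≤ LinearMap.ker ψ := by
      rw [← hspaneq, Submodule.span_le]
      rintro _ ⟨i, rfl⟩
      rw [SetLike.mem_coe, LinearMap.mem_ker]
      simp [ψ, castv, hcon i]
    have := hψker hxK
    rw [LinearMap.mem_ker] at this
    simp only [ψ, LinearMap.sub_apply, LinearMap.proj_apply, sub_eq_zero, castv] at this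
    exact hxne (by exact_mod_cast this)
  -- reindex
  refine ⟨fun i => u' (finCongr hdm.symm i), fun i => ha _, ?_, fun j1 j2 hne => ?_⟩
  · exact hb.comp (finCongr hdm.symm) (finCongr hdm.symm).injective
  · obtain ⟨i, hi⟩ := hc j1 j2 hne
    exact ⟨finCongr hdm i, by simpa using hi⟩

end SolsAux
namespace SolsAux

lemma pibox_card (d : ℕ) (s : ℕ) (i0 : Fin d) :
    (Fintype.piFinset (fun i : Fin d => if i = i0 then ({(0:ℤ)} : Finset ℤ) else Finset.Ico (0:ℤ) (s:ℤ))).card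
      = s ^ (d - 1) := by
  classical
  rw [Fintype.card_piFinset]
  have h1 : ∀ i : Fin d, (if i = i0 then ({(0:ℤ)} : Finset ℤ) else Finset.Ico (0:ℤ) (s:ℤ)).card
      = if i = i0 then 1 else s := by
    intro i
    split <;> simp [Int.card_Ico]
  simp only [h1]
  rw [← Finset.mul_prod_erase Finset.univ _ (Finset.mem_univ i0)]
  rw [if_pos rfl, one_mul]
  rw [Finset.prod_congr rfl (fun i hi => if_neg (Finset.ne_of_mem_erase hi))]
  rw [Finset.prod_const, Finset.card_erase_of_mem (Finset.mem_univ i0), Finset.card_univ,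
    Fintype.card_fin]

/-- counting points of a box satisfying one nondegenerate linear equation -/
lemma linear_eq_card (d s : ℕ) (a : Fin d → ℤ) (i0 : Fin d) (ha : a i0 ≠ 0) (cst : ℤ) :
    ((Fintype.piFinset (fun _ : Fin d => Finset.Ico (0:ℤ) (s:ℤ))).filter
      (fun t => ∑ i, t i * a i = cst)).card ≤ s ^ (d - 1) := by
  classical
  rw [← pibox_card d s i0]
  apply Finset.card_le_card_of_injOn (fun t => Function.update t i0 0)
  · intro t ht
    rw [Finset.mem_coe, Finset.mem_filter, Fintype.mem_piFinset] at ht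
    rw [Finset.mem_coe, Fintype.mem_piFinset]
    intro i
    dsimp only
    rw [Function.update_apply]
    by_cases h : i = i0
    · simp [h]
    · simp only [if_neg h]
      exact ht.1 i
  · intro t ht t' ht' hupd
    rw [Finset.coe_filter, Set.mem_setOf_eq] at ht ht'
    have hcoords : ∀ i, i ≠ i0 → t i = t' i := by
      intro i hi
      have h2 : Function.update t i0 0 i = Function.update t' i0 0 i := congrFun hupd i
      rwa [Function.update_apply, Function.update_apply, if_neg hi, if_neg hi] at h2
    have e1 : t i0 * a i0 + ∑ i ∈ Finset.univ.erase i0, t i * a i = ∑ i, t i * a i :=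
      Finset.add_sum_erase _ (fun i => t i * a i) (Finset.mem_univ i0)
    have e2 : t' i0 * a i0 + ∑ i ∈ Finset.univ.erase i0, t' i * a i = ∑ i, t' i * a i :=
      Finset.add_sum_erase _ (fun i => t' i * a i) (Finset.mem_univ i0)
    have hsum : t i0 * a i0 + ∑ i ∈ Finset.univ.erase i0, t i * a i
        = t' i0 * a i0 + ∑ i ∈ Finset.univ.erase i0, t' i * a i := by
      rw [e1, e2, ht.2, ht'.2]
    have herase : ∑ i ∈ Finset.univ.erase i0, t i * a i
        = ∑ i ∈ Finset.univ.erase i0, t' i * a i :=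
      Finset.sum_congr rfl fun i hi => by rw [hcoords i (Finset.ne_of_mem_erase hi)]
    have hi0 : t i0 = t' i0 := by
      have h2 : t i0 * a i0 = t' i0 * a i0 := by omega
      exact mul_right_cancel₀ ha h2
    funext i
    by_cases h : i = i0
    · rw [h, hi0]
    · exact hcoords i h
end SolsAux

namespace SolsAux

set_option maxHeartbeats 1000000 in
lemma card_box_ge_core {r m : ℕ}
    (A : Matrix (Fin r) (Fin m) ℤ) (b : Fin r → ℤ) {d : ℕ} (hd : 0 < d)
    (x0 : Fin m → ℤ) (hx0 : A.mulVec x0 = b)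
    (v : Fin m → ℤ) (hv0 : A.mulVec v = 0) (hvpos : ∀ j, 0 < v j)
    (u : Fin d → Fin m → ℤ) (hua : ∀ i, A.mulVec (u i) = 0)
    (hub : LinearIndependent ℚ (fun i => castv (u i)))
    (huc : ∀ j1 j2 : Fin m, j1 ≠ j2 → ∃ i, u i j1 ≠ u i j2) :
    ∃ c : ℝ, 0 < c ∧ ∃ n₀ : ℕ, ∀ n ≥ n₀,
      c * (n : ℝ) ^ d ≤
        (Nat.card {x : Fin m → ℤ //
          A.mulVec x = b ∧ Function.Injective x ∧ ∀ j, 1 ≤ x j ∧ x j ≤ (n : ℤ)} : ℝ) := by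
  classical
  -- constants
  set X : ℕ := ∑ j, (x0 j).natAbs with hX
  set U : ℕ := ∑ i, ∑ j, (u i j).natAbs with hU
  set V : ℕ := ∑ j, (v j).natAbs with hV
  set B : ℕ := (V + 1) * (X + U + 1) with hB
  have hBpos : 0 < B := by positivity
  -- basic coordinate bounds
  have hXb : ∀ j, |x0 j| ≤ (X : ℤ) := by
    intro j
    rw [Int.abs_eq_natAbs]
    exact_mod_cast Finset.single_le_sum (f := fun j => (x0 j).natAbs)
      (fun j _ => Nat.zero_le _) (Finset.mem_univ j)
  have hUb : ∀ j, ∑ i, |u i j| ≤ (U : ℤ) := by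
    intro j
    have h1 : ∀ i : Fin d, (u i j).natAbs ≤ ∑ j', (u i j').natAbs := fun i =>
      Finset.single_le_sum (f := fun j' => (u i j').natAbs)
        (fun _ _ => Nat.zero_le _) (Finset.mem_univ j)
    have h2 : ∑ i, (u i j).natAbs ≤ U := by
      rw [hU]; exact Finset.sum_le_sum fun i _ => h1 i
    calc ∑ i, |u i j| = ((∑ i, (u i j).natAbs : ℕ) : ℤ) := by push_cast; rfl
      _ ≤ (U : ℤ) := by exact_mod_cast h2
  have hVb : ∀ j, v j ≤ (V : ℤ) := by
    intro j
    have h1 : v j ≤ |v j| := le_abs_self _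
    have h2 : |v j| = ((v j).natAbs : ℤ) := Int.abs_eq_natAbs _
    have h3 : (v j).natAbs ≤ V :=
      Finset.single_le_sum (f := fun j => (v j).natAbs)
        (fun _ _ => Nat.zero_le _) (Finset.mem_univ j)
    calc v j ≤ ((v j).natAbs : ℤ) := h2 ▸ h1
      _ ≤ (V : ℤ) := by exact_mod_cast h3
  have hv1 : ∀ j, 1 ≤ v j := fun j => hvpos j
  refine ⟨1 / (2 * ((4 * B : ℕ) : ℝ) ^ d), by positivity, 2 * B * (2 * m ^ 2 + 2) + 4 * B,
    fun n hn => ?_⟩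
  -- the step size
  set s : ℕ := n / (2 * B) with hs
  have h2Bpos : 0 < 2 * B := by omega
  have h2Bs : 2 * B * s ≤ n := by
    rw [hs, mul_comm]
    exact Nat.div_mul_le_self n (2 * B)
  have hslt : n < 2 * B * (s + 1) := by
    have h1 : 2 * B * s + n % (2 * B) = n := by rw [hs]; exact Nat.div_add_mod n (2 * B)
    have h2 : n % (2 * B) < 2 * B := Nat.mod_lt n h2Bpos
    have h3 : 2 * B * (s + 1) = 2 * B * s + 2 * B := by ring
    omega
  have hs2m : 2 * m ^ 2 + 2 ≤ s := by
    rw [hs, Nat.le_div_iff_mul_le h2Bpos]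
    calc (2 * m ^ 2 + 2) * (2 * B) = 2 * B * (2 * m ^ 2 + 2) := by ring
      _ ≤ n := le_trans (Nat.le_add_right _ _) hn
  have hspos : 0 < s := lt_of_lt_of_le (by omega) hs2m
  have hn4B : 4 * B ≤ n := le_trans (Nat.le_add_left _ _) hn
  have hBs1 : B * (s + 1) ≤ n := by
    have h1 : 2 * (B * (s + 1)) = 2 * B * s + 2 * B := by ring
    omega
  -- the affine family of solutions
  set T : ℤ := (X : ℤ) + (s : ℤ) * (U : ℤ) + 1 with hT
  have hTpos : 0 < T := by positivity
  set xt : (Fin d → ℤ) → Fin m → ℤ :=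
    fun t j => x0 j + T * v j + ∑ i, t i * u i j with hxt
  -- solutions
  have F1 : ∀ t, A.mulVec (xt t) = b := by
    intro t
    have h1 : xt t = x0 + T • v + ∑ i, t i • u i := by
      funext j
      simp only [hxt, Pi.add_apply, Pi.smul_apply, smul_eq_mul, Finset.sum_apply]
    have h2 : ∀ i : Fin d, A.mulVec (t i • u i) = (0 : Fin r → ℤ) := fun i => by
      rw [Matrix.mulVec_smul, hua i, smul_zero]
    have h3 : A.mulVec (∑ i, t i • u i) = 0 := by
      rw [← Matrix.mulVecLin_apply, map_sum]
      simp only [Matrix.mulVecLin_apply, h2]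
      simp
    rw [h1, Matrix.mulVec_add, Matrix.mulVec_add, Matrix.mulVec_smul, hx0, hv0, smul_zero, h3]
    simp
  -- bounds
  have F2 : ∀ t : Fin d → ℤ, (∀ i, 0 ≤ t i ∧ t i < (s : ℤ)) →
      ∀ j, 1 ≤ xt t j ∧ xt t j ≤ (n : ℤ) := by
    intro t ht j
    have hsum : |∑ i, t i * u i j| ≤ (s : ℤ) * (U : ℤ) := by
      calc |∑ i, t i * u i j| ≤ ∑ i, |t i * u i j| := Finset.abs_sum_le_sum_abs _ _
        _ ≤ ∑ i, (s : ℤ) * |u i j| := by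
            apply Finset.sum_le_sum
            intro i _
            rw [abs_mul]
            apply mul_le_mul_of_nonneg_right _ (abs_nonneg _)
            rw [abs_of_nonneg (ht i).1]
            exact le_of_lt (ht i).2
        _ = (s : ℤ) * ∑ i, |u i j| := by rw [Finset.mul_sum]
        _ ≤ (s : ℤ) * (U : ℤ) :=
            mul_le_mul_of_nonneg_left (hUb j) (by positivity)
    have habs := abs_le.1 hsum
    have hx0j := abs_le.1 (hXb j)
    constructor
    · have hTv : T * 1 ≤ T * v j :=
        mul_le_mul_of_nonneg_left (hv1 j) (le_of_lt hTpos)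
      simp only [hxt]
      rw [mul_one] at hTv
      have hTval : T = (X : ℤ) + (s : ℤ) * (U : ℤ) + 1 := hT
      linarith [habs.1, hx0j.1, hTv]
    · have hTv : T * v j ≤ T * (V : ℤ) :=
        mul_le_mul_of_nonneg_left (hVb j) (le_of_lt hTpos)
      have hnZ : ((V : ℤ) + 1) * ((X : ℤ) + U + 1) * ((s : ℤ) + 1) ≤ (n : ℤ) := by
        exact_mod_cast hBs1
      simp only [hxt]
      have hTval : T = (X : ℤ) + (s : ℤ) * (U : ℤ) + 1 := hT
      have c0X : (0:ℤ) ≤ (X:ℤ) := Int.natCast_nonneg X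
      have c0U : (0:ℤ) ≤ (U:ℤ) := Int.natCast_nonneg U
      have c0V : (0:ℤ) ≤ (V:ℤ) := Int.natCast_nonneg V
      have c0s : (0:ℤ) ≤ (s:ℤ) := Int.natCast_nonneg s
      nlinarith [habs.2, hx0j.2, hTv, hnZ, mul_nonneg c0X c0s, mul_nonneg c0V c0s,
        mul_nonneg c0U c0V, mul_nonneg (mul_nonneg c0X c0V) c0s,
        mul_nonneg (mul_nonneg c0U c0V) c0s, mul_nonneg c0U c0s]
  -- injectivity of the parametrisation
  have F3 : Function.Injective xt := by
    intro t t' htt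
    have h1 : ∀ j, ∑ i, (t i - t' i) * u i j = 0 := by
      intro j
      have := congrFun htt j
      simp only [hxt] at this
      have h2 : ∑ i, (t i - t' i) * u i j = ∑ i, t i * u i j - ∑ i, t' i * u i j := by
        rw [← Finset.sum_sub_distrib]
        exact Finset.sum_congr rfl fun i _ => by ring
      omega
    have h3 : ∑ i, ((t i - t' i : ℤ) : ℚ) • castv (u i) = 0 := by
      funext j
      simp only [Finset.sum_apply, Pi.smul_apply, smul_eq_mul, castv, Pi.zero_apply]
      have := h1 j
      push_cast
      exact_mod_cast congrArg (fun z : ℤ => (z : ℚ)) this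
    have h4 := Fintype.linearIndependent_iff.1 hub _ h3
    funext i
    have h5 := h4 i
    have h6 : (t i - t' i : ℤ) = 0 := by exact_mod_cast h5
    omega
  -- the box of parameters
  set Tb : Finset (Fin d → ℤ) := Fintype.piFinset (fun _ : Fin d => Finset.Ico (0:ℤ) (s:ℤ))
    with hTbdef
  have hTbmem : ∀ t : Fin d → ℤ, t ∈ Tb ↔ ∀ i, 0 ≤ t i ∧ t i < (s : ℤ) := by
    intro t
    rw [hTbdef, Fintype.mem_piFinset]
    simp [Finset.mem_Ico]
  have hTbcard : Tb.card = s ^ d := by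
    rw [hTbdef, Fintype.card_piFinset]
    simp [Int.card_Ico]
  set Good : Finset (Fin d → ℤ) := Tb.filter (fun t => Function.Injective (xt t)) with hGood
  set Bad : Finset (Fin d → ℤ) := Tb.filter (fun t => ¬ Function.Injective (xt t)) with hBad
  have hGB : Good.card + Bad.card = s ^ d := by
    rw [hGood, hBad, Finset.card_filter_add_card_filter_not, hTbcard]
  -- bound on the bad set
  have hBadsub : Bad ⊆ (Finset.univ.offDiag).biUnion
      (fun p : Fin m × Fin m => Tb.filter (fun t => xt t p.1 = xt t p.2)) := by
    intro t ht
    rw [hBad, Finset.mem_filter] at ht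
    obtain ⟨j1, j2, hev, hne⟩ := Function.not_injective_iff.1 ht.2
    rw [Finset.mem_biUnion]
    exact ⟨(j1, j2), Finset.mem_offDiag.2 ⟨Finset.mem_univ _, Finset.mem_univ _, hne⟩,
      Finset.mem_filter.2 ⟨ht.1, hev⟩⟩
  have hpairb : ∀ p ∈ (Finset.univ.offDiag : Finset (Fin m × Fin m)),
      (Tb.filter (fun t => xt t p.1 = xt t p.2)).card ≤ s ^ (d - 1) := by
    rintro ⟨j1, j2⟩ hp
    have hne : j1 ≠ j2 := (Finset.mem_offDiag.1 hp).2.2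
    obtain ⟨i0, hi0⟩ := huc j1 j2 hne
    have hane : (fun i => u i j1 - u i j2) i0 ≠ 0 := sub_ne_zero.2 hi0
    have hfe : Tb.filter (fun t => xt t j1 = xt t j2)
        = Tb.filter (fun t => ∑ i, t i * (u i j1 - u i j2)
            = (x0 j2 - x0 j1) + T * (v j2 - v j1)) := by
      apply Finset.filter_congr
      intro t _
      simp only [hxt]
      have hsp : ∑ i, t i * (u i j1 - u i j2)
          = ∑ i, t i * u i j1 - ∑ i, t i * u i j2 := by
        rw [← Finset.sum_sub_distrib]
        exact Finset.sum_congr rfl fun i _ => by ring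
      have hsp2 : T * (v j2 - v j1) = T * v j2 - T * v j1 := by ring
      constructor
      · intro h
        rw [hsp, hsp2]
        linarith
      · intro h
        rw [hsp, hsp2] at h
        linarith
    rw [hfe, hTbdef]
    exact linear_eq_card d s (fun i => u i j1 - u i j2) i0 hane _
  have hBadcard : Bad.card ≤ m ^ 2 * s ^ (d - 1) := by
    calc Bad.card ≤ ((Finset.univ.offDiag).biUnion
          (fun p : Fin m × Fin m => Tb.filter (fun t => xt t p.1 = xt t p.2))).card :=
          Finset.card_le_card hBadsub
      _ ≤ ∑ p ∈ Finset.univ.offDiag, (Tb.filter (fun t => xt t p.1 = xt t p.2)).card :=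
          Finset.card_biUnion_le
      _ ≤ ∑ _p ∈ (Finset.univ.offDiag : Finset (Fin m × Fin m)), s ^ (d - 1) :=
          Finset.sum_le_sum hpairb
      _ = (Finset.univ.offDiag : Finset (Fin m × Fin m)).card * s ^ (d - 1) := by
          rw [Finset.sum_const, smul_eq_mul]
      _ ≤ m ^ 2 * s ^ (d - 1) := by
          apply Nat.mul_le_mul_right
          rw [Finset.offDiag_card]
          simp only [Finset.card_univ, Fintype.card_fin]
          have : m ^ 2 = m * m := by ring
          omega
  -- injection into the proper solutions
  haveI : Finite {x : Fin m → ℤ //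
      A.mulVec x = b ∧ Function.Injective x ∧ ∀ j, 1 ≤ x j ∧ x j ≤ (n : ℤ)} := by
    apply Finite.of_injective (fun x (j : Fin m) =>
      (⟨x.1 j, Finset.mem_Icc.2 (x.2.2.2 j)⟩ : (Finset.Icc (1:ℤ) (n:ℤ))))
    intro x y h
    apply Subtype.ext
    funext j
    exact congrArg Subtype.val (congrFun h j)
  have hGoodle : Good.card ≤ Nat.card {x : Fin m → ℤ //
      A.mulVec x = b ∧ Function.Injective x ∧ ∀ j, 1 ≤ x j ∧ x j ≤ (n : ℤ)} := by
    rw [← Nat.card_eq_finsetCard Good]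
    apply Nat.card_le_card_of_injective (fun t => ⟨xt t.1, F1 t.1,
      (Finset.mem_filter.1 t.2).2,
      F2 t.1 ((hTbmem t.1).1 (Finset.mem_filter.1 t.2).1)⟩)
    intro t t' h
    exact Subtype.ext (F3 (congrArg Subtype.val h))
  -- final real chain
  have hGR : ((s:ℝ)) ^ d - (m ^ 2 : ℝ) * (s:ℝ) ^ (d - 1) ≤ (Good.card : ℝ) := by
    have h1 : (Good.card : ℝ) + (Bad.card : ℝ) = (s:ℝ) ^ d := by exact_mod_cast hGB
    have h2 : (Bad.card : ℝ) ≤ (m ^ 2 : ℝ) * (s:ℝ) ^ (d - 1) := by exact_mod_cast hBadcard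
    linarith
  have hsplit : ((s:ℝ)) ^ d = (s:ℝ) ^ (d - 1) * (s:ℝ) := by
    rw [← pow_succ]
    congr 1
    exact (Nat.succ_pred_eq_of_pos hd).symm
  have hm2s : (m ^ 2 : ℝ) ≤ (s:ℝ) / 2 := by
    have h1 : (2 * m ^ 2 : ℕ) ≤ s := le_trans (Nat.le_add_right _ _) hs2m
    have h2 : ((2 * m ^ 2 : ℕ) : ℝ) ≤ (s : ℝ) := by exact_mod_cast h1
    push_cast at h2
    linarith
  have hhalf : (s:ℝ) ^ d / 2 ≤ (Good.card : ℝ) := by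
    have hp : (0:ℝ) ≤ (s:ℝ) ^ (d - 1) := by positivity
    calc (s:ℝ) ^ d / 2 = (s:ℝ) ^ (d - 1) * ((s:ℝ) - (s:ℝ) / 2) := by rw [hsplit]; ring
      _ ≤ (s:ℝ) ^ (d - 1) * ((s:ℝ) - (m ^ 2 : ℝ)) := by
          apply mul_le_mul_of_nonneg_left _ hp
          linarith
      _ = (s:ℝ) ^ d - (m ^ 2 : ℝ) * (s:ℝ) ^ (d - 1) := by rw [hsplit]; ring
      _ ≤ (Good.card : ℝ) := hGR
  have hsn : ((n:ℝ)) / ((4 * B : ℕ) : ℝ) ≤ (s:ℝ) := by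
    have h4 : (0:ℝ) < ((4 * B : ℕ) : ℝ) := by
      have : 0 < 4 * B := by positivity
      exact_mod_cast this
    rw [div_le_iff₀ h4]
    have hn4 : n ≤ 4 * B * s := by
      have hs1 : 2 * B * 1 ≤ 2 * B * s := Nat.mul_le_mul_left _ hspos
      have h5 : 2 * B * (s + 1) = 2 * B * s + 2 * B := by ring
      have h6 : 4 * B * s = 2 * B * s + 2 * B * s := by ring
      linarith
    calc (n:ℝ) ≤ ((4 * B * s : ℕ) : ℝ) := by exact_mod_cast hn4
      _ = (s:ℝ) * ((4 * B : ℕ) : ℝ) := by push_cast; ring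
  have hdiv0 : (0:ℝ) ≤ (n:ℝ) / ((4 * B : ℕ) : ℝ) := by positivity
  calc (1 / (2 * ((4 * B : ℕ) : ℝ) ^ d)) * (n : ℝ) ^ d
      = ((n:ℝ) / ((4 * B : ℕ) : ℝ)) ^ d / 2 := by
        rw [div_pow]
        have h4 : (0:ℝ) < ((4 * B : ℕ) : ℝ) := by
          have h5 : 0 < 4 * B := by positivity
          exact_mod_cast h5
        field_simp
    _ ≤ (s:ℝ) ^ d / 2 := by gcongr
    _ ≤ (Good.card : ℝ) := hhalf
    _ ≤ (Nat.card {x : Fin m → ℤ //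
          A.mulVec x = b ∧ Function.Injective x ∧ ∀ j, 1 ≤ x j ∧ x j ≤ (n : ℤ)} : ℝ) := by
        exact_mod_cast hGoodle

end SolsAux
end SolsAuxSection

/-- **Lemma (counting solutions in `[n]^m`).** -/
theorem sols_count_bounds {r m : ℕ} (hr : 0 < r) (hrm : r < m)
    (A : Matrix (Fin r) (Fin m) ℤ) (b : Fin r → ℤ)
    (hb : ∃ x : Fin m → ℤ, A.mulVec x = b) :
    (∀ n : ℕ,
      Nat.card {x : Fin m → ℤ //
          A.mulVec x = b ∧ Function.Injective x ∧ ∀ j, 1 ≤ x j ∧ x j ≤ n} ≤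
        Nat.card {x : Fin m → ℤ // A.mulVec x = b ∧ ∀ j, 1 ≤ x j ∧ x j ≤ n} ∧
      Nat.card {x : Fin m → ℤ // A.mulVec x = b ∧ ∀ j, 1 ≤ x j ∧ x j ≤ n} ≤
        n ^ (m - rkZ A)) ∧
    (IsPositiveMat A → ∃ c : ℝ, 0 < c ∧ ∃ n₀ : ℕ, ∀ n ≥ n₀,
      c * (n : ℝ) ^ (m - rkZ A) ≤
        (Nat.card {x : Fin m → ℤ //
          A.mulVec x = b ∧ Function.Injective x ∧ ∀ j, 1 ≤ x j ∧ x j ≤ n} : ℝ)) := by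
  constructor
  · intro n
    constructor
    · haveI : Finite {x : Fin m → ℤ //
          A.mulVec x = b ∧ ∀ j, 1 ≤ x j ∧ x j ≤ (n : ℤ)} :=
        SolsAux.finite_box _ n
      apply Nat.card_le_card_of_injective
        (fun x => (⟨x.1, x.2.1, x.2.2.2⟩ :
          {x : Fin m → ℤ // A.mulVec x = b ∧ ∀ j, 1 ≤ x j ∧ x j ≤ (n : ℤ)}))
      intro x y h
      have h2 := congrArg
        (fun z : {x : Fin m → ℤ // A.mulVec x = b ∧ ∀ j, 1 ≤ x j ∧ x j ≤ (n : ℤ)} => z.1) h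
      exact Subtype.ext h2
    · exact SolsAux.card_box_le A b n
  · rintro ⟨⟨v, hv0, hvpos⟩, hpair⟩
    obtain ⟨u, hua, hub, huc⟩ := SolsAux.exists_kernel_family A hpair
    have hd : 0 < m - (A.map ((↑) : ℤ → ℚ)).rank := by
      have h1 : (A.map ((↑) : ℤ → ℚ)).rank ≤ r :=
        le_trans (Matrix.rank_le_card_height _) (by simp)
      omega
    obtain ⟨x0, hx0⟩ := hb
    exact SolsAux.card_box_ge_core A b hd x0 hx0 v hv0 hvpos u hua hub huc
end

section
/- Let m > r be positive integers, A ∈ ℤ^{r×m} a positive matrix, b ∈ ℤ^r, and 𝔓 ⊆ 𝔓_0(A). Then for every K ∈ ℕ there is a constant C (depending only on A, b, 𝔓 and K) such that for all n ∈ ℕ and all sets Z ⊆ {1,…,n} with |Z| ≤ K, the number of solutions y ∈ S_𝔓(A,b) ∩ [n]^m whose set of entries {y} meets Z is at most C · n^{m − rk(A) − 1}. -/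
open Matrix Finset MeasureTheory ProbabilityTheory Filter Topology
open scoped BoundedContinuousFunction NNReal ENNReal

attribute [local instance] Classical.propDecidable

open Module

-- separating coordinates
private lemma sep_coords {m : ℕ} : ∀ (d : ℕ) (W : Submodule ℚ (Fin m → ℚ)), finrank ℚ W ≤ d →
    ∃ J : Finset (Fin m), J.card ≤ finrank ℚ W ∧ ∀ w ∈ W, (∀ j ∈ J, w j = 0) → w = 0 := by
  intro d
  induction d with
  | zero =>
    intro W hW
    have hbot : W = ⊥ := by
      have h0 : finrank ℚ W = 0 := Nat.le_zero.mp hW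
      rwa [Submodule.finrank_eq_zero] at h0
    exact ⟨∅, by simp, fun w hw _ => by rw [hbot] at hw; simpa using hw⟩
  | succ d ih =>
    intro W hW
    by_cases hbot : W = ⊥
    · exact ⟨∅, by simp, fun w hw _ => by rw [hbot] at hw; simpa using hw⟩
    · obtain ⟨w0, hw0W, hw0⟩ := Submodule.exists_mem_ne_zero_of_ne_bot hbot
      obtain ⟨j0, hj0⟩ := Function.ne_iff.mp hw0
      set W1 := W ⊓ LinearMap.ker (LinearMap.proj j0 : (Fin m → ℚ) →ₗ[ℚ] ℚ) with hW1
      have hlt : W1 < W := by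
        refine lt_of_le_of_ne inf_le_left (fun h => ?_)
        have : w0 ∈ W1 := h ▸ hw0W
        exact hj0 this.2
      have hfr : finrank ℚ W1 < finrank ℚ W := Submodule.finrank_lt_finrank_of_lt hlt
      obtain ⟨J1, hJ1card, hJ1⟩ := ih W1 (by omega)
      refine ⟨insert j0 J1, ?_, ?_⟩
      · calc (insert j0 J1).card ≤ J1.card + 1 := Finset.card_insert_le _ _
          _ ≤ finrank ℚ W1 + 1 := by omega
          _ ≤ finrank ℚ W := by omega
      · intro w hw hz
        have hwW1 : w ∈ W1 := ⟨hw, hz j0 (Finset.mem_insert_self _ _)⟩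
        exact hJ1 w hwW1 (fun j hj => hz j (Finset.mem_insert_of_mem hj))

private lemma finite_box {m n : ℕ} (p : (Fin m → ℤ) → Prop)
    (hp : ∀ y, p y → ∀ j, 1 ≤ y j ∧ y j ≤ (n : ℤ)) : Finite {y : Fin m → ℤ // p y} := by
  refine Finite.of_injective
    (fun y => (fun j => (⟨y.1 j, Finset.mem_Icc.mpr (hp y.1 y.2 j)⟩ :
      (Finset.Icc (1:ℤ) (n:ℤ))))) ?_
  intro y y' h
  exact Subtype.ext (funext fun j => congrArg Subtype.val (congrFun h j))

private lemma count_coset {m n : ℕ} (hn : 1 ≤ n) (W : Submodule ℚ (Fin m → ℚ)) (v : Fin m → ℚ)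
    (e : ℕ) (he : finrank ℚ W ≤ e) :
    Nat.card {y : Fin m → ℤ // ((fun j => (y j : ℚ)) - v ∈ W) ∧ ∀ j, 1 ≤ y j ∧ y j ≤ (n : ℤ)}
      ≤ n ^ e := by
  obtain ⟨J, hJcard, hJ⟩ := sep_coords (finrank ℚ W) W le_rfl
  have key : Nat.card {y : Fin m → ℤ // ((fun j => (y j : ℚ)) - v ∈ W) ∧
      ∀ j, 1 ≤ y j ∧ y j ≤ (n : ℤ)} ≤ Nat.card ({j : Fin m // j ∈ J} → {a : ℤ // a ∈ Finset.Icc (1:ℤ) (n:ℤ)}) := by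
    refine Nat.card_le_card_of_injective
      (fun y => fun j => ⟨y.1 j.1, Finset.mem_Icc.mpr (y.2.2 j.1)⟩) ?_
    intro y y' h
    have hcoord : ∀ j ∈ J, (y.1 j : ℚ) = (y'.1 j : ℚ) := by
      intro j hj
      have h' : y.1 j = y'.1 j := congrArg Subtype.val (congrFun h ⟨j, hj⟩)
      exact_mod_cast h'
    have hWmem : ((fun j => (y.1 j : ℚ)) - fun j => (y'.1 j : ℚ)) ∈ W := by
      have := W.sub_mem y.2.1 y'.2.1
      simpa using this
    have hzero := hJ _ hWmem (by
      intro j hj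
      simp only [Pi.sub_apply]
      rw [hcoord j hj, sub_self])
    refine Subtype.ext (funext fun j => ?_)
    have : (y.1 j : ℚ) - (y'.1 j : ℚ) = 0 := congrFun hzero j
    exact_mod_cast sub_eq_zero.mp this
  calc Nat.card {y : Fin m → ℤ // ((fun j => (y j : ℚ)) - v ∈ W) ∧
        ∀ j, 1 ≤ y j ∧ y j ≤ (n : ℤ)} ≤ _ := key
    _ = n ^ J.card := by
        rw [Nat.card_eq_fintype_card, Fintype.card_fun, Fintype.card_coe, Fintype.card_coe,
          Int.card_Icc]
        norm_num
    _ ≤ n ^ e := Nat.pow_le_pow_right hn (le_trans hJcard he)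

private lemma contract_mulVec {r m : ℕ} (A : Matrix (Fin r) (Fin m) ℤ) (s : Setoid (Fin m))
    (x : Quotient s → ℚ) :
    ((contract A s).map (Int.cast : ℤ → ℚ)).mulVec x
      = (A.map (Int.cast : ℤ → ℚ)).mulVec (fun j => x (Quotient.mk s j)) := by
  funext i
  simp only [Matrix.mulVec, Matrix.map_apply, dotProduct, contract]
  rw [← Finset.sum_fiberwise Finset.univ (fun j => Quotient.mk s j)
    (fun j => ((A i j : ℚ)) * x (Quotient.mk s j))]
  refine Finset.sum_congr rfl fun c _ => ?_
  push_cast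
  rw [Finset.sum_mul]
  refine Finset.sum_congr rfl fun j hj => ?_
  rw [(Finset.mem_filter.mp hj).2]

private lemma fiber_bound {r m : ℕ} (A : Matrix (Fin r) (Fin m) ℤ) (b : Fin r → ℤ)
    (P : Set (Setoid (Fin m))) (hPsub : P ⊆ partitionFamily A)
    (hPpos : ∀ s ∈ P, IsPositiveMat (contract A s))
    {n : ℕ} (hn : 1 ≤ n) (s : Setoid (Fin m)) (j0 : Fin m) (z : ℤ) :
    Nat.card {y : Fin m → ℤ // A.mulVec y = b ∧ Setoid.ker y ∈ P ∧
        (∀ j, 1 ≤ y j ∧ y j ≤ (n : ℤ)) ∧ Setoid.ker y = s ∧ y j0 = z}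
      ≤ n ^ (m - rkZ A - 1) := by
  by_cases hne : Nonempty {y : Fin m → ℤ // A.mulVec y = b ∧ Setoid.ker y ∈ P ∧
      (∀ j, 1 ≤ y j ∧ y j ≤ (n : ℤ)) ∧ Setoid.ker y = s ∧ y j0 = z}
  swap
  · rw [not_nonempty_iff] at hne
    rw [Nat.card_of_isEmpty]
    exact Nat.zero_le _
  obtain ⟨y0, hy0A, hy0P, hy0box, hy0ker, hy0z⟩ := hne
  have hsP : s ∈ P := hy0ker ▸ hy0P
  -- the contracted matrix over ℚ
  set Aq : Matrix (Fin r) (Quotient s) ℚ := (contract A s).map (Int.cast : ℤ → ℚ) with hAq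
  set U : Submodule ℚ (Quotient s → ℚ) := LinearMap.ker Aq.mulVecLin with hU
  set c0 : Quotient s := Quotient.mk s j0 with hc0
  set W' : Submodule ℚ (Quotient s → ℚ) :=
    U ⊓ LinearMap.ker (LinearMap.proj c0 : (Quotient s → ℚ) →ₗ[ℚ] ℚ) with hW'
  set W : Submodule ℚ (Fin m → ℚ) :=
    Submodule.map (LinearMap.funLeft ℚ ℚ (Quotient.mk s)) W' with hW
  -- rank facts
  have hrk : rkZ (contract A s) = rkZ A := hPsub hsP
  have hUrank : finrank ℚ U + rkZ A = Fintype.card (Quotient s) := by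
    have h1 := LinearMap.finrank_range_add_finrank_ker Aq.mulVecLin
    rw [finrank_fintype_fun_eq_card] at h1
    rw [← hU] at h1
    have h2 : finrank ℚ (LinearMap.range Aq.mulVecLin) = rkZ A := hrk
    omega
  -- positivity gives strictness
  have hW'lt : W' < U := by
    obtain ⟨x, hx0, hxpos⟩ := (hPpos s hsP).1
    refine lt_of_le_of_ne inf_le_left (fun h => ?_)
    have hxU : (fun c => ((x c : ℚ))) ∈ U := by
      rw [hU, LinearMap.mem_ker, Matrix.mulVecLin_apply]
      funext i
      have := (RingHom.map_mulVec (Int.castRingHom ℚ) (contract A s) x i).symm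
      simp only [hx0] at this
      simp [Function.comp] at this
      exact this
    rw [← h] at hxU
    have hzero : ((x c0 : ℚ)) = 0 := by
      have := hxU.2
      simpa using this
    have hz' : x c0 = 0 := by exact_mod_cast hzero
    exact absurd hz' (hxpos c0).ne'
  have hWfr : finrank ℚ W ≤ m - rkZ A - 1 := by
    have h1 : finrank ℚ W ≤ finrank ℚ W' := Submodule.finrank_map_le _ _
    have h2 : finrank ℚ W' < finrank ℚ U := Submodule.finrank_lt_finrank_of_lt hW'lt
    have h3 : Fintype.card (Quotient s) ≤ m := by
      simpa using Fintype.card_le_of_surjective (Quotient.mk s) Quotient.mk_surjective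
    omega
  -- every element of the fiber lies in the coset y0 + W
  have hsub : Nat.card {y : Fin m → ℤ // A.mulVec y = b ∧ Setoid.ker y ∈ P ∧
      (∀ j, 1 ≤ y j ∧ y j ≤ (n : ℤ)) ∧ Setoid.ker y = s ∧ y j0 = z} ≤
    Nat.card {y : Fin m → ℤ // ((fun j => (y j : ℚ)) - (fun j => (y0 j : ℚ)) ∈ W) ∧
      ∀ j, 1 ≤ y j ∧ y j ≤ (n : ℤ)} := by
    haveI : Finite {y : Fin m → ℤ // ((fun j => (y j : ℚ)) - (fun j => (y0 j : ℚ)) ∈ W) ∧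
        ∀ j, 1 ≤ y j ∧ y j ≤ (n : ℤ)} := finite_box _ (fun y hy => hy.2)
    refine Nat.card_le_card_of_injective (fun y => ⟨y.1, ?_, y.2.2.2.1⟩) ?_
    swap
    · intro y y' h
      have h2 := congrArg Subtype.val h
      exact Subtype.ext h2
    -- membership in W
    obtain ⟨y, hyA, hyP, hybox, hyker, hyz⟩ := y
    set w : Fin m → ℚ := (fun j => (y j : ℚ)) - (fun j => (y0 j : ℚ)) with hw2
    have hresp : ∀ i i', Quotient.mk s i = Quotient.mk s i' → w i = w i' := by
      intro i i' h
      have hrel : s.r i i' := Quotient.exact h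
      have h1 : y i = y i' := by rw [← hyker] at hrel; exact hrel
      have h2 : y0 i = y0 i' := by rw [← hy0ker] at hrel; exact hrel
      simp [hw2, h1, h2]
    set x : Quotient s → ℚ := fun c => w c.out with hx
    have hxw : (fun i => x (Quotient.mk s i)) = w := by
      funext i
      exact hresp _ _ (Quotient.out_eq _)
    refine ⟨x, ⟨?_, ?_⟩, ?_⟩
    · -- x ∈ U
      simp only [SetLike.mem_coe]
      rw [hU, LinearMap.mem_ker, Matrix.mulVecLin_apply, hAq, contract_mulVec, hxw]
      have hcast : ∀ (u : Fin m → ℤ), (A.map (Int.cast : ℤ → ℚ)).mulVec (fun j => ((u j : ℚ)))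
          = fun i => ((A.mulVec u i : ℚ)) := by
        intro u
        funext i
        exact (RingHom.map_mulVec (Int.castRingHom ℚ) A u i).symm
      have : (A.map (Int.cast : ℤ → ℚ)).mulVec w
          = (A.map (Int.cast : ℤ → ℚ)).mulVec (fun j => ((y j : ℚ)))
            - (A.map (Int.cast : ℤ → ℚ)).mulVec (fun j => ((y0 j : ℚ))) := by
        rw [← Matrix.mulVec_sub]
      rw [this, hcast, hcast, hyA, hy0A, sub_self]
    · -- x c0 = 0
      simp only [SetLike.mem_coe]
      rw [LinearMap.mem_ker, LinearMap.proj_apply]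
      have : x c0 = w j0 := by
        rw [hx, hc0]
        exact hresp _ _ (Quotient.out_eq _)
      rw [this]
      simp [hw2, hyz, hy0z]
    · -- funLeft maps x to w
      funext i
      exact congrFun hxw i
  exact le_trans hsub (count_coset hn W _ _ hWfr)

/-- **Lemma (solutions meeting a fixed bounded set, first part).** -/
theorem typeSols_meeting_fixed_set {r m : ℕ} (hr : 0 < r) (hrm : r < m)
    (A : Matrix (Fin r) (Fin m) ℤ) (hApos : IsPositiveMat A) (b : Fin r → ℤ)
    (P : Set (Setoid (Fin m))) (hPsub : P ⊆ partitionFamily A)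
    (hPpos : ∀ s ∈ P, IsPositiveMat (contract A s)) (K : ℕ) :
    ∃ C : ℝ, ∀ n : ℕ, ∀ Z : Finset ℤ,
      (∀ z ∈ Z, 1 ≤ z ∧ z ≤ (n : ℤ)) → Z.card ≤ K →
      (Nat.card {y : Fin m → ℤ //
          A.mulVec y = b ∧ Setoid.ker y ∈ P ∧ (∀ j, 1 ≤ y j ∧ y j ≤ n) ∧
            ∃ j, y j ∈ Z} : ℝ) ≤
        C * (n : ℝ) ^ (m - rkZ A - 1) := by
  haveI hSetFin : Finite (Setoid (Fin m)) := by
    refine Finite.of_injective (fun s : Setoid (Fin m) => s.r) ?_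
    intro s t h
    exact Setoid.ext fun a b => iff_of_eq (congrFun (congrFun h a) b)
  haveI := Fintype.ofFinite (Setoid (Fin m))
  set Ns : ℕ := Fintype.card (Setoid (Fin m)) with hNs
  refine ⟨((K * m * Ns : ℕ) : ℝ), ?_⟩
  intro n Z hZbox hZK
  set e : ℕ := m - rkZ A - 1 with he
  rcases Nat.eq_zero_or_pos n with hn0 | hn
  · -- n = 0 : no solutions
    haveI : IsEmpty {y : Fin m → ℤ //
        A.mulVec y = b ∧ Setoid.ker y ∈ P ∧ (∀ j, 1 ≤ y j ∧ y j ≤ n) ∧ ∃ j, y j ∈ Z} := by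
      constructor
      rintro ⟨y, -, -, hbox, -⟩
      have := hbox ⟨0, by omega⟩
      omega
    rw [Nat.card_of_isEmpty, Nat.cast_zero]
    positivity
  -- n ≥ 1
  set fib : ({z : ℤ // z ∈ Z} × Fin m × Setoid (Fin m)) → Type := fun t => {y : Fin m → ℤ // A.mulVec y = b ∧ Setoid.ker y ∈ P ∧
      (∀ j, 1 ≤ y j ∧ y j ≤ (n : ℤ)) ∧ Setoid.ker y = t.2.2 ∧ y t.2.1 = (t.1 : ℤ)} with hfib
  haveI hfibFin : ∀ t, Finite (fib t) := fun t => finite_box _ (fun y hy => hy.2.2.1)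
  haveI : ∀ t, Fintype (fib t) := fun t => Fintype.ofFinite _
  haveI hTFin : Finite {y : Fin m → ℤ //
      A.mulVec y = b ∧ Setoid.ker y ∈ P ∧ (∀ j, 1 ≤ y j ∧ y j ≤ n) ∧ ∃ j, y j ∈ Z} :=
    finite_box _ (fun y hy => hy.2.2.1)
  -- injection into the sigma type
  have hinj : Nat.card {y : Fin m → ℤ //
      A.mulVec y = b ∧ Setoid.ker y ∈ P ∧ (∀ j, 1 ≤ y j ∧ y j ≤ n) ∧ ∃ j, y j ∈ Z}
      ≤ Nat.card (Σ t : ({z : ℤ // z ∈ Z} × Fin m × Setoid (Fin m)), fib t) := by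
    refine Nat.card_le_card_of_injective (fun y =>
      ⟨(⟨y.1 (y.2.2.2.2.choose), y.2.2.2.2.choose_spec⟩, y.2.2.2.2.choose, Setoid.ker y.1),
        ⟨y.1, y.2.1, y.2.2.1, y.2.2.2.1, rfl, rfl⟩⟩) ?_
    intro y y' h
    have h2 := congrArg (fun p : (Σ t : ({z : ℤ // z ∈ Z} × Fin m × Setoid (Fin m)), fib t) => p.2.1) h
    exact Subtype.ext h2
  have hsum : Nat.card (Σ t : ({z : ℤ // z ∈ Z} × Fin m × Setoid (Fin m)), fib t) ≤ (Z.card * (m * Ns)) * n ^ e := by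
    rw [Nat.card_eq_fintype_card, Fintype.card_sigma]
    have hbd : ∀ t : ({z : ℤ // z ∈ Z} × Fin m × Setoid (Fin m)), Fintype.card (fib t) ≤ n ^ e := by
      intro t
      rw [← Nat.card_eq_fintype_card]
      exact fiber_bound A b P hPsub hPpos hn t.2.2 t.2.1 (t.1 : ℤ)
    calc ∑ t : ({z : ℤ // z ∈ Z} × Fin m × Setoid (Fin m)), Fintype.card (fib t) ≤ ∑ _t : ({z : ℤ // z ∈ Z} × Fin m × Setoid (Fin m)), n ^ e := Finset.sum_le_sum fun t _ => hbd t
      _ = Fintype.card ({z : ℤ // z ∈ Z} × Fin m × Setoid (Fin m)) * n ^ e := by rw [Finset.sum_const, Finset.card_univ, smul_eq_mul]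
      _ = (Z.card * (m * Ns)) * n ^ e := by
          rw [Fintype.card_prod, Fintype.card_prod, Fintype.card_coe, Fintype.card_fin]
  have htotal : Nat.card {y : Fin m → ℤ //
      A.mulVec y = b ∧ Setoid.ker y ∈ P ∧ (∀ j, 1 ≤ y j ∧ y j ≤ n) ∧ ∃ j, y j ∈ Z}
      ≤ (K * m * Ns) * n ^ e := by
    refine le_trans hinj (le_trans hsum ?_)
    have : Z.card * (m * Ns) ≤ K * (m * Ns) := Nat.mul_le_mul_right _ hZK
    calc Z.card * (m * Ns) * n ^ e ≤ K * (m * Ns) * n ^ e := Nat.mul_le_mul_right _ this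
      _ = K * m * Ns * n ^ e := by ring
  calc (Nat.card {y : Fin m → ℤ //
      A.mulVec y = b ∧ Setoid.ker y ∈ P ∧ (∀ j, 1 ≤ y j ∧ y j ≤ n) ∧ ∃ j, y j ∈ Z} : ℝ)
      ≤ ((K * m * Ns) * n ^ e : ℕ) := by exact_mod_cast htotal
    _ = ((K * m * Ns : ℕ) : ℝ) * (n : ℝ) ^ e := by push_cast; ring
end

section
/- Let m > r be positive integers, A ∈ ℤ^{r×m} a positive and abundant matrix, b ∈ ℤ^r, and 𝔓 ⊆ 𝔓_0(A). Then for every K ∈ ℕ there is a constant C (depending only on A, b, 𝔓 and K) such that for all n ∈ ℕ and all sets Z ⊆ {1,…,n} with |Z| ≤ K, the number of solutions y ∈ S_𝔓(A,b) ∩ [n]^m whose set of entries {y} meets Z in at least two elements is at most C · n^{m − rk(A) − 2}. -/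
open Matrix Finset MeasureTheory ProbabilityTheory Filter Topology
open scoped BoundedContinuousFunction NNReal ENNReal

attribute [local instance] Classical.propDecidable

/-- Key linear algebra lemma: a matrix has a set of `rank` many columns such that any
kernel vector supported on those columns is zero. -/
lemma exists_indep_cols {r : ℕ} {ι : Type*} [Fintype ι] (B : Matrix (Fin r) ι ℚ) :
    ∃ T : Finset ι, T.card = B.rank ∧
      ∀ v : ι → ℚ, B.mulVec v = 0 → (∀ j, j ∉ T → v j = 0) → v = 0 := by
  obtain ⟨s, hs_sub, hspan, hindep⟩ := exists_linearIndependent ℚ (Set.range Bᵀ)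
  have hs_fin : s.Finite := (Set.finite_range Bᵀ).subset hs_sub
  haveI : Fintype s := hs_fin.fintype
  have hpick : ∀ x : s, ∃ j : ι, Bᵀ j = (x : Fin r → ℚ) := fun x => hs_sub x.2
  choose g hg using hpick
  have hginj : Function.Injective g := by
    intro x y hxy
    apply Subtype.ext
    rw [← hg x, ← hg y, hxy]
  refine ⟨Finset.univ.image g, ?_, ?_⟩
  · rw [Finset.card_image_of_injective _ hginj, Finset.card_univ,
      Matrix.rank_eq_finrank_span_cols,
      ← (show Submodule.span ℚ s = Submodule.span ℚ (Set.range B.col) from hspan), finrank_span_set_eq_card hindep,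
      Set.toFinset_card]
  · intro v hv hsupp
    have hsum : ∑ x : s, v (g x) • (x : Fin r → ℚ) = 0 := by
      funext i0
      have h0 : (B.mulVec v) i0 = 0 := by rw [hv]; rfl
      rw [Matrix.mulVec, dotProduct] at h0
      have : ∑ j ∈ Finset.univ.image g, B i0 j * v j = ∑ j, B i0 j * v j := by
        refine Finset.sum_subset (Finset.subset_univ _) ?_
        intro j _ hj
        rw [hsupp j hj, mul_zero]
      rw [Finset.sum_apply, Pi.zero_apply]
      rw [Finset.sum_image (fun a _ b _ h => hginj h)] at this
      rw [← h0, ← this]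
      refine Finset.sum_congr rfl ?_
      intro x _
      have : (x : Fin r → ℚ) i0 = B i0 (g x) := by rw [← hg x]; rfl
      rw [Pi.smul_apply, this, smul_eq_mul, mul_comm]
    have hz := (Fintype.linearIndependent_iff.mp hindep) (fun x => v (g x)) hsum
    funext j
    by_cases hj : j ∈ Finset.univ.image g
    · obtain ⟨x, -, rfl⟩ := Finset.mem_image.mp hj
      exact hz x
    · exact hsupp j hj

lemma card_fixed_two {r m n : ℕ} (A : Matrix (Fin r) (Fin m) ℤ) (b : Fin r → ℤ)
    {i j : Fin m} (hij : i ≠ j)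
    (hrank : rkZ (colSub A ({i, j} : Finset (Fin m))ᶜ) = rkZ A) (z1 z2 : ℤ) :
    ((Fintype.piFinset fun _ : Fin m => Finset.Icc (1 : ℤ) (n : ℤ)).filter
        (fun y => A.mulVec y = b ∧ y i = z1 ∧ y j = z2)).card ≤ n ^ (m - rkZ A - 2) := by
  classical
  set Q : Finset (Fin m) := ({i, j} : Finset (Fin m))ᶜ with hQ
  set B : Matrix (Fin r) Q ℚ := (colSub A Q).map (Int.cast : ℤ → ℚ) with hB
  obtain ⟨T, hTcard, hTker⟩ := exists_indep_cols B
  set T' : Finset (Fin m) := T.image Subtype.val with hT'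
  have hT'card : T'.card = rkZ A := by
    rw [hT', Finset.card_image_of_injective _ Subtype.val_injective, hTcard, ← hrank]
    rfl
  have hT'Q : ∀ k ∈ T', k ∈ Q := by
    intro k hk
    obtain ⟨q, -, rfl⟩ := Finset.mem_image.mp hk
    exact q.2
  set F : Finset (Fin m) := Finset.univ \ (T' ∪ {i, j}) with hF
  have hdisj : Disjoint T' ({i, j} : Finset (Fin m)) := by
    rw [Finset.disjoint_left]
    intro k hk hk2
    have := hT'Q k hk
    rw [hQ, Finset.mem_compl] at this
    exact this hk2
  have hFcard : F.card = m - rkZ A - 2 := by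
    rw [hF, Finset.card_sdiff_of_subset (Finset.subset_univ _), Finset.card_univ, Fintype.card_fin,
      Finset.card_union_of_disjoint hdisj, hT'card,
      Finset.card_insert_of_notMem (by simpa using hij), Finset.card_singleton]
    omega
  have key : ((Fintype.piFinset fun _ : Fin m => Finset.Icc (1 : ℤ) (n : ℤ)).filter
        (fun y => A.mulVec y = b ∧ y i = z1 ∧ y j = z2)).card ≤
      (Fintype.piFinset fun k : Fin m =>
        if k ∈ F then Finset.Icc (1 : ℤ) (n : ℤ) else ({0} : Finset ℤ)).card := by
    apply Finset.card_le_card_of_injOn (fun y k => if k ∈ F then y k else 0)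
    · intro y hy
      rw [Finset.mem_coe, Finset.mem_filter] at hy
      rw [Finset.mem_coe, Fintype.mem_piFinset]
      intro k
      by_cases hk : k ∈ F
      · simp only [if_pos hk]
        exact Fintype.mem_piFinset.mp hy.1 k
      · simp [if_neg hk]
    · intro y hy y' hy' hfeq
      rw [Finset.mem_coe, Finset.mem_filter] at hy hy'
      obtain ⟨-, hAy, hyi, hyj⟩ := hy
      obtain ⟨-, hAy', hyi', hyj'⟩ := hy'
      set w : Fin m → ℚ := fun k => (y k : ℚ) - (y' k : ℚ) with hw
      have hwij : ∀ k, k = i ∨ k = j → w k = 0 := by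
        rintro k (rfl | rfl) <;> simp [hw, hyi, hyj, hyi', hyj']
      have hwF : ∀ k ∈ F, w k = 0 := by
        intro k hk
        have := congrFun hfeq k
        simp only [if_pos hk] at this
        simp [hw, this]
      have hwsupp : ∀ k, k ∉ T' → w k = 0 := by
        intro k hk
        by_cases hkF : k ∈ F
        · exact hwF k hkF
        · apply hwij
          rw [hF, Finset.mem_sdiff] at hkF
          push_neg at hkF
          have := hkF (Finset.mem_univ k)
          rw [Finset.mem_union] at this
          rcases this with h | h
          · exact absurd h hk
          · simpa using h
      have hrow : ∀ i0, ∑ k, (A i0 k : ℚ) * w k = 0 := by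
        intro i0
        have h1 : ∑ k, A i0 k * y k = b i0 := congrFun hAy i0
        have h2 : ∑ k, A i0 k * y' k = b i0 := congrFun hAy' i0
        have : ∑ k, (A i0 k : ℚ) * w k =
            ((∑ k, A i0 k * y k : ℤ) : ℚ) - ((∑ k, A i0 k * y' k : ℤ) : ℚ) := by
          push_cast
          rw [← Finset.sum_sub_distrib]
          exact Finset.sum_congr rfl fun k _ => by rw [hw]; ring
        rw [this, h1, h2, sub_self]
      set v : Q → ℚ := fun q => w q with hv
      have hBv : B.mulVec v = 0 := by
        funext i0
        show ∑ q : Q, B i0 q * v q = 0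
        rw [Finset.univ_eq_attach]
        have step1 : ∑ q ∈ Q.attach, B i0 q * v q = ∑ k ∈ Q, (A i0 k : ℚ) * w k :=
          Finset.sum_attach Q (fun k => (A i0 k : ℚ) * w k)
        rw [step1]
        rw [Finset.sum_subset (Finset.subset_univ Q)]
        · exact hrow i0
        · intro k _ hk
          rw [hQ, Finset.mem_compl, not_not] at hk
          rw [hwij k (by simpa using hk), mul_zero]
      have hvT : ∀ q, q ∉ T → v q = 0 := by
        intro q hq
        apply hwsupp
        intro hmem
        obtain ⟨t, ht, htq⟩ := Finset.mem_image.mp hmem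
        exact hq (by rwa [Subtype.val_injective htq] at ht)
      have hv0 := hTker v hBv hvT
      have hw0 : ∀ k, w k = 0 := by
        intro k
        by_cases hk : k ∈ Q
        · exact congrFun hv0 ⟨k, hk⟩
        · rw [hQ, Finset.mem_compl, not_not] at hk
          exact hwij k (by simpa using hk)
      funext k
      have := hw0 k
      rw [hw] at this
      exact_mod_cast sub_eq_zero.mp this
  refine key.trans ?_
  rw [Fintype.card_piFinset]
  have : ∀ k : Fin m, (if k ∈ F then Finset.Icc (1 : ℤ) (n : ℤ) else ({0} : Finset ℤ)).card =
      if k ∈ F then n else 1 := by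
    intro k
    split_ifs
    · rw [Int.card_Icc]; simp
    · simp
  rw [Finset.prod_congr rfl fun k _ => this k, Finset.prod_ite_mem, Finset.univ_inter,
    Finset.prod_const, hFcard]

/-- **Lemma (solutions meeting a fixed bounded set in at least two elements).** -/
theorem typeSols_meeting_fixed_set_twice {r m : ℕ} (hr : 0 < r) (hrm : r < m)
    (A : Matrix (Fin r) (Fin m) ℤ) (hApos : IsPositiveMat A) (hAab : IsAbundantMat A)
    (b : Fin r → ℤ)
    (P : Set (Setoid (Fin m))) (hPsub : P ⊆ partitionFamily A)
    (hPpos : ∀ s ∈ P, IsPositiveMat (contract A s)) (K : ℕ) :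
    ∃ C : ℝ, ∀ n : ℕ, ∀ Z : Finset ℤ,
      (∀ z ∈ Z, 1 ≤ z ∧ z ≤ (n : ℤ)) → Z.card ≤ K →
      (Nat.card {y : Fin m → ℤ //
          A.mulVec y = b ∧ Setoid.ker y ∈ P ∧ (∀ j, 1 ≤ y j ∧ y j ≤ n) ∧
            2 ≤ ((Finset.image y Finset.univ) ∩ Z).card} : ℝ) ≤
        C * (n : ℝ) ^ (m - rkZ A - 2) := by
  classical
  have habQ : ∀ i j : Fin m, i ≠ j →
      rkZ (colSub A (({i, j} : Finset (Fin m))ᶜ)) = rkZ A := by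
    intro i j hij
    apply hAab.2
    rw [Finset.card_compl, Finset.card_insert_of_notMem (by simpa using hij),
      Finset.card_singleton, Fintype.card_fin]
  refine ⟨((m * m * K * K : ℕ) : ℝ), ?_⟩
  intro n Z hZ hZK
  set pred : (Fin m → ℤ) → Prop := fun y =>
    A.mulVec y = b ∧ Setoid.ker y ∈ P ∧ (∀ j, 1 ≤ y j ∧ y j ≤ (n : ℤ)) ∧
      2 ≤ ((Finset.image y Finset.univ) ∩ Z).card with hpred
  set s : Finset (Fin m → ℤ) :=
    (Fintype.piFinset fun _ : Fin m => Finset.Icc (1 : ℤ) (n : ℤ)).filter pred with hs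
  have hset : {y : Fin m → ℤ | pred y} = ↑s := by
    ext y
    simp only [Set.mem_setOf_eq, hs, Finset.coe_filter, Fintype.mem_piFinset, Finset.mem_Icc]
    rw [hpred]
    tauto
  have hcard : Nat.card {y : Fin m → ℤ // pred y} = s.card := by
    rw [← Set.coe_setOf, Nat.card_coe_set_eq, hset, Set.ncard_coe_finset]
  set I : Finset ((Fin m × Fin m) × (ℤ × ℤ)) :=
    ((Finset.univ.filter fun p : Fin m × Fin m => p.1 ≠ p.2) ×ˢ (Z ×ˢ Z)) with hI
  set t : ((Fin m × Fin m) × (ℤ × ℤ)) → Finset (Fin m → ℤ) := fun q =>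
    (Fintype.piFinset fun _ : Fin m => Finset.Icc (1 : ℤ) (n : ℤ)).filter
      (fun y => A.mulVec y = b ∧ y q.1.1 = q.2.1 ∧ y q.1.2 = q.2.2) with ht
  have hcover : s ⊆ I.biUnion t := by
    intro y hy
    rw [hs, Finset.mem_filter] at hy
    obtain ⟨hypi, hAy, -, -, h2⟩ := hy
    have h2' : 1 < ((Finset.image y Finset.univ) ∩ Z).card := by omega
    obtain ⟨za, hza, zb, hzb, hab⟩ := Finset.one_lt_card.mp h2'
    rw [Finset.mem_inter] at hza hzb
    obtain ⟨i0, -, hi0⟩ := Finset.mem_image.mp hza.1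
    obtain ⟨j0, -, hj0⟩ := Finset.mem_image.mp hzb.1
    have hij0 : i0 ≠ j0 := by
      intro h; apply hab; rw [← hi0, ← hj0, h]
    refine Finset.mem_biUnion.mpr ⟨((i0, j0), (za, zb)), ?_, ?_⟩
    · rw [hI, Finset.mem_product, Finset.mem_product]
      exact ⟨Finset.mem_filter.mpr ⟨Finset.mem_univ _, hij0⟩, hza.2, hzb.2⟩
    · rw [ht, Finset.mem_filter]
      exact ⟨hypi, hAy, hi0, hj0⟩
  have hbound : ∀ q ∈ I, (t q).card ≤ n ^ (m - rkZ A - 2) := by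
    intro q hq
    rw [hI, Finset.mem_product] at hq
    have hij : q.1.1 ≠ q.1.2 := (Finset.mem_filter.mp hq.1).2
    exact card_fixed_two A b hij (habQ _ _ hij) q.2.1 q.2.2
  have hIcard : I.card ≤ m * m * K * K := by
    rw [hI, Finset.card_product, Finset.card_product]
    have h1 : (Finset.univ.filter fun p : Fin m × Fin m => p.1 ≠ p.2).card ≤ m * m := by
      calc (Finset.univ.filter fun p : Fin m × Fin m => p.1 ≠ p.2).card
          ≤ (Finset.univ : Finset (Fin m × Fin m)).card := Finset.card_filter_le _ _
        _ = m * m := by simp [Finset.card_univ]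
    calc (Finset.univ.filter fun p : Fin m × Fin m => p.1 ≠ p.2).card * (Z.card * Z.card)
        ≤ (m * m) * (K * K) := Nat.mul_le_mul h1 (Nat.mul_le_mul hZK hZK)
      _ = m * m * K * K := by ring
  have hmain : s.card ≤ m * m * K * K * n ^ (m - rkZ A - 2) := by
    calc s.card ≤ (I.biUnion t).card := Finset.card_le_card hcover
      _ ≤ ∑ q ∈ I, (t q).card := Finset.card_biUnion_le
      _ ≤ I.card • n ^ (m - rkZ A - 2) := Finset.sum_le_card_nsmul _ _ _ hbound
      _ = I.card * n ^ (m - rkZ A - 2) := by rw [smul_eq_mul]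
      _ ≤ m * m * K * K * n ^ (m - rkZ A - 2) :=
          Nat.mul_le_mul_right _ hIcard
  have : Nat.card {y : Fin m → ℤ // pred y} ≤ m * m * K * K * n ^ (m - rkZ A - 2) :=
    hcard ▸ hmain
  calc (Nat.card {y : Fin m → ℤ // pred y} : ℝ)
      ≤ ((m * m * K * K * n ^ (m - rkZ A - 2) : ℕ) : ℝ) := by exact_mod_cast this
    _ = ((m * m * K * K : ℕ) : ℝ) * (n : ℝ) ^ (m - rkZ A - 2) := by push_cast; ring
end

section
/- Let m_A > r_A and m_B > r_B be positive integers, A ∈ ℤ^{r_A×m_A}, B ∈ ℤ^{r_B×m_B}, P ⊆ [m_A], M : P → [m_B] an injection, and Q ⊆ [m_A + m_B − |P|]. Set Q_1 = Q ∩ [m_A] and Q_2 = Q ∖ Q_1. Then rk((A ×_M B)^{Q̄}) ≥ rk(A^{[m_A]∖Q_1}) + rk(B^{([m_B]∖M(P))∖Q_2'}), where Q_2' is the set of columns of B^{[m_B]∖M(P)} corresponding to the indices in Q_2. In particular, rk(A ×_M B) ≥ rk(A) + rk(B^{[m_B]∖M(P)}). -/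
open Matrix Finset MeasureTheory ProbabilityTheory Filter Topology
open scoped BoundedContinuousFunction NNReal ENNReal

attribute [local instance] Classical.propDecidable

/-- Column index type of the compounded matrix `A ×_M B`: the columns of `A` outside `P`,
the merged columns indexed by `P`, and the columns of `B` outside `M(P)`. -/
abbrev compIdx {mA mB : ℕ} (P : Finset (Fin mA)) (M : Fin mA → Fin mB) : Type :=
  ({j : Fin mA // j ∉ P} ⊕ {j : Fin mA // j ∈ P}) ⊕ {j : Fin mB // j ∉ P.image M}

/-- The compounded matrix `A ×_M B`, whose first block row is
`(A^{[mA]∖P} | columns of A indexed by P | 0)` and whose second block row is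
`(0 | columns of B indexed by M(P) | B^{[mB]∖M(P)})`. -/
noncomputable def compMat {rA mA rB mB : ℕ}
    (A : Matrix (Fin rA) (Fin mA) ℤ) (B : Matrix (Fin rB) (Fin mB) ℤ)
    (P : Finset (Fin mA)) (M : Fin mA → Fin mB) :
    Matrix (Fin rA ⊕ Fin rB) (compIdx P M) ℤ :=
  fun i c =>
    match i, c with
    | Sum.inl i, Sum.inl (Sum.inl j) => A i j.1
    | Sum.inl i, Sum.inl (Sum.inr j) => A i j.1
    | Sum.inl _, Sum.inr _ => 0
    | Sum.inr _, Sum.inl (Sum.inl _) => 0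
    | Sum.inr i, Sum.inl (Sum.inr j) => B i (M j.1)
    | Sum.inr i, Sum.inr j => B i j.1

open Matrix Module

private noncomputable def gmap (n₁ n₂ : Type*) : (n₂ → ℚ) →ₗ[ℚ] ((n₁ ⊕ n₂) → ℚ) where
  toFun z := Sum.elim 0 z
  map_add' a b := by funext i; cases i <;> simp
  map_smul' c a := by funext i; cases i <;> simp

private lemma rank_le_aux {n₁ n₂ γ γ₁ γ₂ : Type*} [Fintype n₁] [Fintype n₂] [Fintype γ]
    [Fintype γ₁] [Fintype γ₂]
    (C : Matrix (n₁ ⊕ n₂) γ ℚ) (X : Matrix n₁ γ₁ ℚ) (Z : Matrix n₂ γ₂ ℚ)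
    (u : γ₁ → γ) (w : γ₂ → γ)
    (hu : ∀ j i, C (Sum.inl i) (u j) = X i j)
    (hw0 : ∀ j i, C (Sum.inl i) (w j) = 0)
    (hw : ∀ j i, C (Sum.inr i) (w j) = Z i j) :
    X.rank + Z.rank ≤ C.rank := by
  classical
  set V : Submodule ℚ ((n₁ ⊕ n₂) → ℚ) := Submodule.span ℚ (Set.range Cᵀ) with hV
  set π : ((n₁ ⊕ n₂) → ℚ) →ₗ[ℚ] (n₁ → ℚ) := LinearMap.funLeft ℚ ℚ Sum.inl with hπ
  set f : V →ₗ[ℚ] (n₁ → ℚ) := π ∘ₗ V.subtype with hf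
  set g := gmap n₁ n₂ with hgdef
  have hg : Function.Injective g := by
    intro a b h
    funext i
    exact congrFun h (Sum.inr i)
  have h1 : X.rank ≤ finrank ℚ (LinearMap.range f) := by
    rw [Matrix.rank_eq_finrank_span_cols]
    have hrange : LinearMap.range f = V.map π := by
      rw [hf, LinearMap.range_comp, Submodule.range_subtype]
    rw [hrange]
    apply Submodule.finrank_mono
    rw [hV, Submodule.map_span]
    apply Submodule.span_le.mpr
    rintro _ ⟨j, rfl⟩
    apply Submodule.subset_span
    exact ⟨Cᵀ (u j), ⟨u j, rfl⟩, by funext i; exact hu j i⟩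
  -- the (0, Z)-columns
  set W : Submodule ℚ ((n₁ ⊕ n₂) → ℚ) := (Submodule.span ℚ (Set.range Zᵀ)).map g with hW
  have hWV : W ≤ V := by
    rw [hW, hV, Submodule.map_span]
    apply Submodule.span_mono
    rintro _ ⟨_, ⟨j, rfl⟩, rfl⟩
    refine ⟨w j, ?_⟩
    funext i
    cases i with
    | inl i => exact hw0 j i
    | inr i => exact hw j i
  have hWker : W ≤ LinearMap.ker π := by
    rw [hW]
    refine le_trans (Submodule.map_le_iff_le_comap.mpr ?_) le_rfl
    intro x _
    simp only [Submodule.mem_comap, LinearMap.mem_ker]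
    funext i
    rfl
  have hWrank : finrank ℚ W = Z.rank := by
    rw [Matrix.rank_eq_finrank_span_cols, hW,
      ← (Submodule.equivMapOfInjective g hg _).finrank_eq]
    rfl
  set W' : Submodule ℚ V := W.comap V.subtype with hW'
  have hmap : W'.map V.subtype = W := by
    rw [hW', Submodule.map_comap_subtype, inf_of_le_right hWV]
  have hW'rank : finrank ℚ W' = finrank ℚ W := by
    rw [← hmap, Submodule.finrank_map_subtype_eq]
  have hW'ker : W' ≤ LinearMap.ker f := by
    intro x hx
    have : (x : (n₁ ⊕ n₂) → ℚ) ∈ W := by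
      rw [hW'] at hx; exact hx
    have := hWker this
    simpa [hf, LinearMap.mem_ker] using this
  have h2 : Z.rank ≤ finrank ℚ (LinearMap.ker f) := by
    rw [← hWrank, ← hW'rank]
    exact Submodule.finrank_mono hW'ker
  have h3 : finrank ℚ (LinearMap.range f) + finrank ℚ (LinearMap.ker f) = finrank ℚ V :=
    LinearMap.finrank_range_add_finrank_ker f
  have h4 : C.rank = finrank ℚ V := Matrix.rank_eq_finrank_span_cols C
  omega

/-- **Lemma (rank lower bound for compounded matrices).** -/
theorem compMat_rank_lower_bound {rA mA rB mB : ℕ}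
    (hA : 0 < rA) (hA' : rA < mA) (hB : 0 < rB) (hB' : rB < mB)
    (A : Matrix (Fin rA) (Fin mA) ℤ) (B : Matrix (Fin rB) (Fin mB) ℤ)
    (P : Finset (Fin mA)) (M : Fin mA → Fin mB) (hM : Set.InjOn M (P : Set (Fin mA)))
    (Q : Finset (compIdx P M)) :
    (rkZ (colSub A (Finset.univ.filter fun j : Fin mA =>
          (∃ h : j ∉ P, Sum.inl (Sum.inl ⟨j, h⟩) ∈ Q) ∨
          (∃ h : j ∈ P, Sum.inl (Sum.inr ⟨j, h⟩) ∈ Q))ᶜ) +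
        rkZ (colSub (B.submatrix id (Subtype.val : {j : Fin mB // j ∉ P.image M} → Fin mB))
          (Finset.univ.filter fun j : {j : Fin mB // j ∉ P.image M} => Sum.inr j ∈ Q)ᶜ) ≤
      rkZ (colSub (compMat A B P M) Qᶜ)) ∧
    rkZ A + rkZ (B.submatrix id (Subtype.val : {j : Fin mB // j ∉ P.image M} → Fin mB)) ≤
      rkZ (compMat A B P M) := by
  classical
  constructor
  · set S : Finset (Fin mA) := Finset.univ.filter (fun j : Fin mA =>
        (∃ h : j ∉ P, Sum.inl (Sum.inl ⟨j, h⟩) ∈ Q) ∨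
        (∃ h : j ∈ P, Sum.inl (Sum.inr ⟨j, h⟩) ∈ Q)) with hS
    set T : Finset {j : Fin mB // j ∉ P.image M} :=
      Finset.univ.filter (fun j => Sum.inr j ∈ Q) with hT
    have key : ∀ j : Fin mA, j ∈ Sᶜ →
        (∀ h : j ∉ P, Sum.inl (Sum.inl ⟨j, h⟩) ∉ Q) ∧
        (∀ h : j ∈ P, Sum.inl (Sum.inr ⟨j, h⟩) ∉ Q) := by
      intro j hj
      rw [hS, Finset.mem_compl, Finset.mem_filter] at hj
      push_neg at hj
      have hj' := hj (Finset.mem_univ j)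
      exact hj'
    have keyT : ∀ j : {j : Fin mB // j ∉ P.image M}, j ∈ Tᶜ → Sum.inr j ∉ Q := by
      intro j hj
      rw [hT, Finset.mem_compl, Finset.mem_filter] at hj
      push_neg at hj
      exact hj (Finset.mem_univ j)
    unfold rkZ
    refine rank_le_aux _ _ _
      (fun j : (Sᶜ : Finset (Fin mA)) =>
        if h : (j : Fin mA) ∈ P then
          (⟨Sum.inl (Sum.inr ⟨j, h⟩), Finset.mem_compl.mpr ((key j j.2).2 h)⟩ :
            (Qᶜ : Finset (compIdx P M)))
        else ⟨Sum.inl (Sum.inl ⟨j, h⟩), Finset.mem_compl.mpr ((key j j.2).1 h)⟩)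
      (fun j : (Tᶜ : Finset {j : Fin mB // j ∉ P.image M}) =>
        (⟨Sum.inr j, Finset.mem_compl.mpr (keyT j j.2)⟩ : (Qᶜ : Finset (compIdx P M))))
      ?_ ?_ ?_
    · intro j i
      by_cases h : (j : Fin mA) ∈ P
      · simp only [dif_pos h]; rfl
      · simp only [dif_neg h]; rfl
    · intro j i
      simp [colSub, compMat, Matrix.map_apply]
    · intro j i
      rfl
  · unfold rkZ
    refine rank_le_aux _ _ _
      (fun j : Fin mA =>
        if h : j ∈ P then (Sum.inl (Sum.inr ⟨j, h⟩) : compIdx P M)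
        else Sum.inl (Sum.inl ⟨j, h⟩))
      (fun j : {j : Fin mB // j ∉ P.image M} => (Sum.inr j : compIdx P M))
      ?_ ?_ ?_
    · intro j i
      by_cases h : j ∈ P
      · simp only [dif_pos h]; rfl
      · simp only [dif_neg h]; rfl
    · intro j i
      simp [compMat, Matrix.map_apply]
    · intro j i
      rfl
end

section
/- Let m > r be positive integers, A ∈ ℤ^{r×m}, and Q ⊆ [m]. Then the compounded matrix A ×_{id_Q} A satisfies rk(A ×_{id_Q} A) = rk(A) + rk(A^{Q̄}). -/
open Matrix Finset MeasureTheory ProbabilityTheory Filter Topology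
open scoped BoundedContinuousFunction NNReal ENNReal

attribute [local instance] Classical.propDecidable

open Matrix Module

section Helpers
variable {m₁ n₁ m₂ n₂ α β γ : Type*}

lemma finrank_submodule_prod {V W : Type*} [AddCommGroup V] [AddCommGroup W]
    [Module ℚ V] [Module ℚ W] [FiniteDimensional ℚ V] [FiniteDimensional ℚ W]
    (p : Submodule ℚ V) (q : Submodule ℚ W) :
    finrank ℚ (p.prod q) = finrank ℚ p + finrank ℚ q := by
  let f : (p × q) →ₗ[ℚ] V × W := p.subtype.prodMap q.subtype
  have hinj : Function.Injective f := by
    rw [LinearMap.coe_prodMap]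
    exact Function.Injective.prodMap p.injective_subtype q.injective_subtype
  have hr : LinearMap.range f = p.prod q := by
    ext ⟨a, b⟩
    simp only [LinearMap.mem_range, Submodule.mem_prod]
    constructor
    · rintro ⟨⟨u, v⟩, h⟩
      rw [show f (u, v) = (u.1, v.1) from rfl] at h
      obtain ⟨h1, h2⟩ := Prod.mk.injEq .. ▸ h
      exact ⟨h1 ▸ u.2, h2 ▸ v.2⟩
    · rintro ⟨ha, hb⟩; exact ⟨(⟨a, ha⟩, ⟨b, hb⟩), rfl⟩
  rw [← hr, LinearMap.finrank_range_of_inj hinj, Module.finrank_prod]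

lemma rank_fromBlocks_diag [Fintype m₁] [Fintype n₁] [Fintype m₂] [Fintype n₂]
    (B : Matrix m₁ n₁ ℚ) (D : Matrix m₂ n₂ ℚ) :
    (Matrix.fromBlocks B 0 0 D).rank = B.rank + D.rank := by
  classical
  set e := LinearEquiv.sumArrowLequivProdArrow m₁ m₂ ℚ ℚ with he
  have key : LinearMap.range (Matrix.fromBlocks B 0 0 D).mulVecLin
      = ((LinearMap.range B.mulVecLin).prod (LinearMap.range D.mulVecLin)).map
          (e.symm : ((m₁ → ℚ) × (m₂ → ℚ)) →ₗ[ℚ] (m₁ ⊕ m₂ → ℚ)) := by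
    apply le_antisymm
    · rintro _ ⟨x, rfl⟩
      refine ⟨(B *ᵥ (x ∘ Sum.inl), D *ᵥ (x ∘ Sum.inr)),
        ⟨⟨x ∘ Sum.inl, rfl⟩, ⟨x ∘ Sum.inr, rfl⟩⟩, ?_⟩
      have hx : (Matrix.fromBlocks B 0 0 D).mulVecLin x
          = Sum.elim (B *ᵥ (x ∘ Sum.inl)) (D *ᵥ (x ∘ Sum.inr)) := by
        conv_lhs => rw [Matrix.mulVecLin_apply, ← Sum.elim_comp_inl_inr x,
          Matrix.fromBlocks_mulVec]
        simp
      rw [hx]; rfl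
    · rintro _ ⟨⟨u, w⟩, ⟨hu, hw⟩, rfl⟩
      obtain ⟨x, rfl⟩ := hu
      obtain ⟨y, rfl⟩ := hw
      refine ⟨Sum.elim x y, ?_⟩
      show Matrix.fromBlocks B 0 0 D *ᵥ Sum.elim x y = _
      rw [Matrix.fromBlocks_mulVec]
      simp; rfl
  rw [Matrix.rank, key, LinearEquiv.finrank_map_eq, finrank_submodule_prod,
    Matrix.rank, Matrix.rank]

lemma rank_submatrix_cols [Fintype β] [Fintype γ] (A : Matrix α β ℚ) (e : γ ≃ β) :
    (A.submatrix id e).rank = A.rank := by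
  rw [Matrix.rank, Matrix.rank, Matrix.mulVecLin_submatrix]
  have h1 : LinearMap.funLeft ℚ ℚ (id : α → α) = LinearMap.id := by ext; rfl
  rw [h1, LinearMap.id_comp, LinearMap.range_comp_of_range_eq_top]
  rw [LinearMap.range_eq_top]
  exact fun f => ⟨f ∘ e.symm.symm, by ext j; simp [LinearMap.funLeft]⟩

end Helpers

/-- **Lemma (rank of `A ×_{id_Q} A`).** -/
theorem compMat_id_rank {r m : ℕ} (hr : 0 < r) (hrm : r < m)
    (A : Matrix (Fin r) (Fin m) ℤ) (Q : Finset (Fin m)) :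
    rkZ (compMat A A Q (id : Fin m → Fin m)) = rkZ A + rkZ (colSub A Qᶜ) := by
  classical
  set A' : Matrix (Fin r) (Fin m) ℚ := A.map (Int.cast : ℤ → ℚ) with hA'
  set M0 : Matrix (Fin r ⊕ Fin r) (compIdx Q (id : Fin m → Fin m)) ℚ :=
    (compMat A A Q (id : Fin m → Fin m)).map (Int.cast : ℤ → ℚ) with hM0
  set X : Matrix (Fin r) ({j : Fin m // j ∉ Q} ⊕ {j : Fin m // j ∈ Q}) ℚ :=
    fun i c => A' i (Sum.elim Subtype.val Subtype.val c) with hX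
  set Y : Matrix (Fin r) ({j : Fin m // j ∉ Q} ⊕ {j : Fin m // j ∈ Q}) ℚ :=
    fun i c => Sum.elim (fun _ => (0 : ℚ)) (fun j => A' i j.1) c with hY
  set C2 : Matrix (Fin r) {j : Fin m // j ∉ Q.image (id : Fin m → Fin m)} ℚ :=
    fun i j => A' i j.1 with hC2
  set S : Matrix {j : Fin m // j ∉ Q.image (id : Fin m → Fin m)}
      ({j : Fin m // j ∉ Q} ⊕ {j : Fin m // j ∈ Q}) ℚ :=
    fun j c => Sum.elim (fun (j' : {j : Fin m // j ∉ Q}) => if (j : Fin m) = (j' : Fin m) then 1 else 0)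
      (fun _ => (0 : ℚ)) c with hS
  set P : Matrix (Fin r ⊕ Fin r) (Fin r ⊕ Fin r) ℚ := fromBlocks 1 0 (-1) 1 with hP
  set E : Matrix (compIdx Q (id : Fin m → Fin m)) (compIdx Q (id : Fin m → Fin m)) ℚ :=
    fromBlocks 1 0 S 1 with hE
  have hM0block : M0 = fromBlocks X 0 Y C2 := by
    ext i c
    rcases i with i | i <;> rcases c with (c | c) | c <;>
      simp [hM0, hA', hX, hY, hC2, Matrix.fromBlocks, compMat, Matrix.map_apply]
  have hCS : C2 * S = X - Y := by
    ext i c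
    rcases c with c | c
    · have hc : (c : Fin m) ∉ Q.image (id : Fin m → Fin m) := by
        simpa using c.2
      rw [Matrix.mul_apply]
      have hterm : ∀ j : {j : Fin m // j ∉ Q.image (id : Fin m → Fin m)},
          C2 i j * S j (Sum.inl c)
            = if j = (⟨(c : Fin m), hc⟩ : {j : Fin m // j ∉ Q.image (id : Fin m → Fin m)})
              then A' i (c : Fin m) else 0 := by
        intro j
        simp only [hC2, hS, Sum.elim_inl]
        by_cases h : (j : Fin m) = (c : Fin m)
        · simp [h, Subtype.ext_iff]
        · simp [h, Subtype.ext_iff]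
      rw [Finset.sum_congr rfl fun j _ => hterm j, Finset.sum_ite_eq' Finset.univ]
      rw [Matrix.sub_apply]; simp [hX, hY]
    · rw [Matrix.mul_apply, Matrix.sub_apply]; simp [Matrix.mul_apply, hS, hC2, hX, hY]
  have hPdet : IsUnit P.det := by
    rw [hP, Matrix.det_fromBlocks_zero₁₂]
    simp
  have hEdet : IsUnit E.det := by
    rw [hE, Matrix.det_fromBlocks_zero₁₂]
    simp
  have hkey : P * M0 * E = fromBlocks X 0 0 C2 := by
    rw [hM0block, hP, hE, Matrix.fromBlocks_multiply, Matrix.fromBlocks_multiply]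
    congr 1 <;> simp [hCS]
  have hrank : M0.rank = X.rank + C2.rank := by
    have h1 : (P * M0 * E).rank = M0.rank := by
      rw [Matrix.rank_mul_eq_left_of_isUnit_det _ _ hEdet,
        Matrix.rank_mul_eq_right_of_isUnit_det _ _ hPdet]
    rw [← h1, hkey, rank_fromBlocks_diag]
  have hXrank : X.rank = A'.rank := by
    have he : X = A'.submatrix id ((Equiv.sumComm _ _).trans (Equiv.sumCompl (· ∈ Q))) := by
      ext i c
      rcases c with c | c <;> rfl
    rw [he, rank_submatrix_cols]
  have hCrank : C2.rank = ((colSub A Qᶜ).map (Int.cast : ℤ → ℚ)).rank := by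
    have he : C2 = ((colSub A Qᶜ).map (Int.cast : ℤ → ℚ)).submatrix id
        (Equiv.subtypeEquivRight (fun x => by simp)) := by
      ext i c
      rfl
    rw [he, rank_submatrix_cols]
  show M0.rank = A'.rank + ((colSub A Qᶜ).map (Int.cast : ℤ → ℚ)).rank
  rw [hrank, hXrank, hCrank]
end

section
/- Let m > r be positive integers, A ∈ ℤ^{r×m} a positive matrix, and Q ⊆ [m]. If there exists an integer vector y ∈ S(A^{Q̄}, 0) with all coordinates nonzero, then the compounded matrix A ×_{id_Q} A is positive. -/
open Matrix Finset MeasureTheory ProbabilityTheory Filter Topology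
open scoped BoundedContinuousFunction NNReal ENNReal

attribute [local instance] Classical.propDecidable

section Aux

variable {r m : ℕ}

/-- Underlying index of a compounded column. -/
def cIdx {Q : Finset (Fin m)} (c : compIdx Q (id : Fin m → Fin m)) : Fin m :=
  match c with
  | Sum.inl (Sum.inl j) => j.1
  | Sum.inl (Sum.inr j) => j.1
  | Sum.inr j => j.1

lemma sum_split_aux (Q : Finset (Fin m)) (f : Fin m → ℤ) :
    (∑ j : {j : Fin m // j ∉ Q}, f j.1) + (∑ j : {j : Fin m // j ∈ Q}, f j.1)
      = ∑ j, f j := by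
  rw [← Finset.sum_subtype Qᶜ (fun x => Finset.mem_compl) f,
      ← Finset.sum_subtype Q (fun x => Iff.rfl) f, add_comm,
      Finset.sum_add_sum_compl]

lemma sum_image_aux (Q : Finset (Fin m)) (f : Fin m → ℤ) :
    (∑ j : {j : Fin m // j ∉ Q.image (id : Fin m → Fin m)}, f j.1)
      = ∑ j : {j : Fin m // j ∉ Q}, f j.1 :=
  Fintype.sum_equiv (Equiv.subtypeEquivRight (fun x => by simp)) _ _ (fun x => rfl)

lemma compMat_mulVec_diag (A : Matrix (Fin r) (Fin m) ℤ) (Q : Finset (Fin m))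
    (x : Fin m → ℤ) (hx : A.mulVec x = 0) :
    (compMat A A Q (id : Fin m → Fin m)).mulVec (fun c => x (cIdx c)) = 0 := by
  have key : ∀ i : Fin r, (∑ j : {j : Fin m // j ∉ Q}, A i j.1 * x j.1)
      + ∑ j : {j : Fin m // j ∈ Q}, A i j.1 * x j.1 = 0 := by
    intro i
    have h := congrFun hx i
    simp only [Matrix.mulVec, dotProduct, Pi.zero_apply] at h
    rw [sum_split_aux Q (fun j => A i j * x j)]
    exact h
  funext i
  cases i with
  | inl i =>
    show (∑ c : compIdx Q id, compMat A A Q id (Sum.inl i) c * x (cIdx c)) = 0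
    rw [Fintype.sum_sum_type, Fintype.sum_sum_type]
    simp only [compMat, cIdx, zero_mul, Finset.sum_const_zero, add_zero]
    exact key i
  | inr i =>
    show (∑ c : compIdx Q id, compMat A A Q id (Sum.inr i) c * x (cIdx c)) = 0
    rw [Fintype.sum_sum_type, Fintype.sum_sum_type]
    simp only [compMat, cIdx, zero_mul, Finset.sum_const_zero, zero_add, id]
    rw [sum_image_aux Q (fun j => A i j * x j), add_comm]
    exact key i

end Aux

/-- **Lemma (positivity of `A ×_{id_Q} A`).** -/
theorem compMat_id_positive {r m : ℕ} (hr : 0 < r) (hrm : r < m)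
    (A : Matrix (Fin r) (Fin m) ℤ) (hApos : IsPositiveMat A) (Q : Finset (Fin m))
    (hy : ∃ y : ↥(Qᶜ) → ℤ, (colSub A Qᶜ).mulVec y = 0 ∧ ∀ j, y j ≠ 0) :
    IsPositiveMat (compMat A A Q (id : Fin m → Fin m)) := by
  obtain ⟨⟨xp, hxp, hxppos⟩, hdist⟩ := hApos
  obtain ⟨y, hy0, hyne⟩ := hy
  constructor
  · exact ⟨fun c => xp (cIdx c), compMat_mulVec_diag A Q xp hxp, fun c => hxppos _⟩
  · intro c₁ c₂ hne
    by_cases hu : cIdx c₁ = cIdx c₂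
    · -- same underlying index: must be the inl-inl / inr pair with j ∉ Q.
      -- Use the y-based solution.
      set z : compIdx Q (id : Fin m → Fin m) → ℤ := fun c =>
        match c with
        | Sum.inl (Sum.inl j) => y ⟨j.1, Finset.mem_compl.mpr j.2⟩
        | Sum.inl (Sum.inr _) => 0
        | Sum.inr _ => 0 with hz
      have hzsol : (compMat A A Q (id : Fin m → Fin m)).mulVec z = 0 := by
        have key : ∀ i : Fin r,
            (∑ j : {j : Fin m // j ∉ Q}, A i j.1 * y ⟨j.1, Finset.mem_compl.mpr j.2⟩) = 0 := by
          intro i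
          have h := congrFun hy0 i
          simp only [Matrix.mulVec, dotProduct, Pi.zero_apply, colSub,
            Matrix.submatrix_apply, id] at h
          rw [← h]
          exact Fintype.sum_equiv
            (Equiv.subtypeEquivRight (fun x => (Finset.mem_compl (s := Q)).symm)) _ _
            (fun x => rfl)
        funext i
        cases i with
        | inl i =>
          show (∑ c : compIdx Q id, compMat A A Q id (Sum.inl i) c * z c) = 0
          rw [Fintype.sum_sum_type, Fintype.sum_sum_type]
          simp only [compMat, hz, mul_zero, zero_mul, Finset.sum_const_zero, add_zero]
          exact key i
        | inr i =>
          show (∑ c : compIdx Q id, compMat A A Q id (Sum.inr i) c * z c) = 0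
          rw [Fintype.sum_sum_type, Fintype.sum_sum_type]
          simp [compMat, hz]
      refine ⟨z, hzsol, ?_⟩
      -- show z c₁ ≠ z c₂ : case on c₁, c₂
      match c₁, c₂, hne, hu with
      | Sum.inl (Sum.inl j₁), Sum.inl (Sum.inl j₂), hne, hu =>
        exact absurd (by cases j₁; cases j₂; simpa [cIdx] using hu) hne
      | Sum.inl (Sum.inl j₁), Sum.inl (Sum.inr j₂), hne, hu =>
        exact absurd ((show (j₁:Fin m) = (j₂:Fin m) from hu) ▸ j₂.2) j₁.2
      | Sum.inl (Sum.inl j₁), Sum.inr j₂, hne, hu =>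
        simpa [hz] using hyne ⟨j₁.1, Finset.mem_compl.mpr j₁.2⟩
      | Sum.inl (Sum.inr j₁), Sum.inl (Sum.inl j₂), hne, hu =>
        exact absurd ((show (j₁:Fin m) = (j₂:Fin m) from hu).symm ▸ j₁.2) j₂.2
      | Sum.inl (Sum.inr j₁), Sum.inl (Sum.inr j₂), hne, hu =>
        exact absurd (by cases j₁; cases j₂; simpa [cIdx] using hu) hne
      | Sum.inl (Sum.inr j₁), Sum.inr j₂, hne, hu =>
        exact absurd ((show (j₁:Fin m) = (j₂:Fin m) from hu) ▸ j₁.2) (by simpa using j₂.2)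
      | Sum.inr j₁, Sum.inl (Sum.inl j₂), hne, hu =>
        simpa [hz] using (hyne ⟨j₂.1, Finset.mem_compl.mpr j₂.2⟩).symm
      | Sum.inr j₁, Sum.inl (Sum.inr j₂), hne, hu =>
        exact absurd ((show (j₁:Fin m) = (j₂:Fin m) from hu).symm ▸ j₂.2) (by simpa using j₁.2)
      | Sum.inr j₁, Sum.inr j₂, hne, hu =>
        exact absurd (by cases j₁; cases j₂; simpa [cIdx] using hu) hne
    · obtain ⟨x, hxsol, hxne⟩ := hdist _ _ hu
      exact ⟨fun c => x (cIdx c), compMat_mulVec_diag A Q x hxsol, hxne⟩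
end

section
/- Let m > r be positive integers, A ∈ ℤ^{r×m} positive and abundant, i ∈ [m] and Q = {i}. For every positive integer t, the iterated compounded matrix A ×_{id_Q} A ×_{M_1} ⋯ ×_{M_t} A (where each M_j glues the column of the (j+2)-nd copy of A corresponding to column i to the shared column; equivalently, the matrix with t+1 diagonal blocks A^{Q̄}, the column A^Q appended to each of the first t+1 block rows in a common shared column, and a final block row (A^Q | A^{Q̄})) is positive, and its rank equals rk(A) + (t+1)·rk(A^{Q̄}). -/
open Matrix Finset MeasureTheory ProbabilityTheory Filter Topology
open scoped BoundedContinuousFunction NNReal ENNReal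

attribute [local instance] Classical.propDecidable

/-- The iterated compounded ("milky way") matrix: `t+2` copies of `A` all glued along
column `i`. Block row `s` carries its own copy `A^{[m]∖{i}}` of the non-shared columns,
and the shared column carries the column `i` of `A` in every block row. -/
noncomputable def milkyMat {r m : ℕ} (A : Matrix (Fin r) (Fin m) ℤ) (i : Fin m) (t : ℕ) :
    Matrix (Fin (t + 2) × Fin r) ((Fin (t + 2) × {j : Fin m // j ≠ i}) ⊕ Unit) ℤ :=
  fun p c =>
    match c with
    | Sum.inl (s', j) => if p.1 = s' then A p.2 j.1 else 0
    | Sum.inr _ => A p.2 i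


section AuxLemmas

open Submodule Module

/-- Rank of a matrix is invariant under reindexing rows and columns by equivs. -/
lemma rank_submatrix_equiv {K : Type*} [Field K] {l m n o : Type*}
    [Fintype l] [Fintype m] [Fintype n] [Fintype o]
    (A : Matrix m n K) (e₁ : l ≃ m) (e₂ : o ≃ n) :
    (A.submatrix e₁ e₂).rank = A.rank := by
  rw [Matrix.rank_eq_finrank_span_cols, Matrix.rank_eq_finrank_span_cols]
  have hset : Set.range (A.submatrix e₁ e₂)ᵀ
      = (LinearEquiv.funCongrLeft K K e₁ : (m → K) →ₗ[K] (l → K)) '' Set.range Aᵀ := by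
    ext x
    constructor
    · rintro ⟨c, rfl⟩
      exact ⟨Aᵀ (e₂ c), ⟨e₂ c, rfl⟩, rfl⟩
    · rintro ⟨y, ⟨c, rfl⟩, rfl⟩
      exact ⟨e₂.symm c, by ext a; simp [Matrix.submatrix_apply, LinearEquiv.funCongrLeft]⟩
  change finrank K (span K (Set.range (A.submatrix e₁ e₂)ᵀ)) = finrank K (span K (Set.range Aᵀ))
  rw [hset, ← Submodule.map_span]
  exact LinearEquiv.finrank_map_eq (LinearEquiv.funCongrLeft K K e₁) _

/-- If a column submatrix has the same rank, every column lies in the span of those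
columns (over `ℚ`). -/
lemma col_mem_span_of_rank_eq {r m : ℕ} (A : Matrix (Fin r) (Fin m) ℤ)
    (Q : Finset (Fin m)) (h : rkZ (colSub A Q) = rkZ A) (k : Fin m) :
    (A.map (Int.cast : ℤ → ℚ))ᵀ k ∈
      Submodule.span ℚ ((A.map (Int.cast : ℤ → ℚ))ᵀ '' ↑Q) := by
  set N := A.map (Int.cast : ℤ → ℚ) with hN
  have h1 : Set.range ((colSub A Q).map (Int.cast : ℤ → ℚ))ᵀ = Nᵀ '' ↑Q := by
    ext x
    constructor
    · rintro ⟨j, rfl⟩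
      exact ⟨j.1, j.2, funext fun p => rfl⟩
    · rintro ⟨j, hj, rfl⟩
      exact ⟨⟨j, hj⟩, funext fun p => rfl⟩
  have h2 : Submodule.span ℚ (Nᵀ '' ↑Q) ≤ Submodule.span ℚ (Set.range Nᵀ) :=
    Submodule.span_mono (Set.image_subset_range _ _)
  have h3 : finrank ℚ (Submodule.span ℚ (Set.range Nᵀ))
      ≤ finrank ℚ (Submodule.span ℚ (Nᵀ '' ↑Q)) := by
    rw [← h1]
    change finrank ℚ (span ℚ (Set.range N.col))
      ≤ finrank ℚ (span ℚ (Set.range ((colSub A Q).map (Int.cast : ℤ → ℚ)).col))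
    rw [← Matrix.rank_eq_finrank_span_cols, ← Matrix.rank_eq_finrank_span_cols]
    unfold rkZ at h
    rw [h]
  have heq := Submodule.eq_of_le_of_finrank_le h2 h3
  rw [heq]
  exact Submodule.subset_span ⟨k, rfl⟩

/-- Clear denominators: from a rational kernel vector produce an integer one. -/
lemma exists_int_kernel_of_rat {r m : ℕ} (A : Matrix (Fin r) (Fin m) ℤ)
    (v : Fin m → ℚ) (hv : (A.map (Int.cast : ℤ → ℚ)).mulVec v = 0) :
    ∃ (d : ℤ) (u : Fin m → ℤ), 0 < d ∧ (∀ k, (u k : ℚ) = (d : ℚ) * v k) ∧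
      A.mulVec u = 0 := by
  set d : ℤ := ∏ k, ((v k).den : ℤ) with hd
  set u : Fin m → ℤ :=
    fun k => (v k).num * ∏ l ∈ Finset.univ.erase k, ((v l).den : ℤ) with hu
  have hcast : ∀ k, (u k : ℚ) = (d : ℚ) * v k := by
    intro k
    have hden : ((v k).num : ℚ) = ((v k).den : ℚ) * v k := by
      rw [mul_comm]
      exact_mod_cast (Rat.mul_den_eq_num (v k)).symm
    have hsplit : (∏ j, ((v j).den : ℚ))
        = ((v k).den : ℚ) * ∏ l ∈ Finset.univ.erase k, ((v l).den : ℚ) :=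
      (Finset.mul_prod_erase _ _ (Finset.mem_univ k)).symm
    simp only [hu, hd]
    push_cast
    rw [hsplit, hden]
    ring
  refine ⟨d, u, ?_, hcast, ?_⟩
  · exact Finset.prod_pos fun k _ => by exact_mod_cast (v k).pos
  · funext p
    have h0 : ((A.mulVec u p : ℤ) : ℚ) = 0 := by
      have h1 : (A.map (Int.cast : ℤ → ℚ)).mulVec (fun k => (u k : ℚ)) p = 0 := by
        have h2 : (fun k => (u k : ℚ)) = (d : ℚ) • v := funext fun k => hcast k
        rw [h2, Matrix.mulVec_smul, hv]
        simp
      rw [← h1]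
      simp [Matrix.mulVec, dotProduct, Matrix.map_apply]
    exact_mod_cast h0

/-- An integer kernel vector vanishing at `i` and nonvanishing at `j0 ≠ i`. -/
lemma exists_kernel_vec {r m : ℕ} (A : Matrix (Fin r) (Fin m) ℤ)
    (hAab : IsAbundantMat A) (i j0 : Fin m) (hij : j0 ≠ i) :
    ∃ u : Fin m → ℤ, A.mulVec u = 0 ∧ u i = 0 ∧ u j0 ≠ 0 := by
  classical
  set N := A.map (Int.cast : ℤ → ℚ) with hN
  set Q : Finset (Fin m) := {i, j0}ᶜ with hQ
  have hiQ : i ∉ Q := by simp [hQ]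
  have hj0Q : j0 ∉ Q := by simp [hQ]
  have hcard : Fintype.card (Fin m) - 2 ≤ Q.card := by
    rw [hQ, Finset.card_compl, Finset.card_insert_of_notMem (by simp [hij.symm]),
      Finset.card_singleton]
  have hrk := hAab.2 Q hcard
  have hmem := col_mem_span_of_rank_eq A Q hrk j0
  have h1 : (Nᵀ '' ↑Q) = Set.range (fun k : {x // x ∈ Q} => Nᵀ k.1) := by
    ext x
    constructor
    · rintro ⟨j, hj, rfl⟩
      exact ⟨⟨j, hj⟩, rfl⟩
    · rintro ⟨k, rfl⟩
      exact ⟨k.1, k.2, rfl⟩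
  rw [← hN, h1] at hmem
  obtain ⟨c, hc⟩ := (mem_span_range_iff_exists_fun ℚ).1 hmem
  set v : Fin m → ℚ := fun k => if h : k ∈ Q then c ⟨k, h⟩ else if k = j0 then -1 else 0
    with hvdef
  have hvQ : ∀ k (h : k ∈ Q), v k = c ⟨k, h⟩ := fun k h => by simp [hvdef, h]
  have hvi : v i = 0 := by simp [hvdef, hiQ, (Ne.symm hij)]
  have hvj0 : v j0 = -1 := by simp [hvdef, hj0Q]
  have hv : N.mulVec v = 0 := by
    funext p
    have hs : ∑ k, N p k * v k
        = (∑ k ∈ Q, N p k * v k) + ∑ k ∈ Qᶜ, N p k * v k :=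
      (Finset.sum_add_sum_compl Q _).symm
    have hQc : Qᶜ = {i, j0} := by rw [hQ, compl_compl]
    have hs2 : ∑ k ∈ Qᶜ, N p k * v k = - N p j0 := by
      rw [hQc, Finset.sum_pair (Ne.symm hij)]
      rw [hvi, hvj0]
      ring
    have hs1 : ∑ k ∈ Q, N p k * v k = N p j0 := by
      have h := congrFun hc p
      simp only [Finset.sum_apply, Pi.smul_apply, smul_eq_mul,
        Matrix.transpose_apply] at h
      have h2 : ∑ k ∈ Q.attach, N p k.1 * v k.1 = ∑ k ∈ Q.attach, c k * N p k.1 :=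
        Finset.sum_congr rfl fun k _ => by rw [hvQ k.1 k.2]; ring
      rw [← Finset.sum_attach Q (fun k => N p k * v k), h2, ← Finset.univ_eq_attach, h]
    have : N.mulVec v p = ∑ k, N p k * v k := rfl
    rw [this, hs, hs1, hs2]
    simp
  obtain ⟨d, u, hd, hcast, hker⟩ := exists_int_kernel_of_rat A v hv
  refine ⟨u, hker, ?_, ?_⟩
  · have : (u i : ℚ) = 0 := by rw [hcast i, hvi, mul_zero]
    exact_mod_cast this
  · intro h0
    have : (u j0 : ℚ) = (d : ℚ) * (-1) := by rw [hcast j0, hvj0]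
    rw [h0] at this
    simp only [Int.cast_zero, mul_neg_one, zero_eq_neg] at this
    exact hd.ne' (by exact_mod_cast this)

/-- Sum over the subtype `j ≠ i` plus the `i`-term gives the full sum. -/
lemma sum_split_ne {M : Type*} [AddCommMonoid M] {m : ℕ} (i : Fin m) (f : Fin m → M) :
    (∑ j : {j : Fin m // j ≠ i}, f j.1) + f i = ∑ j, f j := by
  classical
  rw [← Finset.sum_subtype (Finset.univ.erase i)
    (fun x => by simp [Finset.mem_erase]) f]
  exact Finset.sum_erase_add _ _ (Finset.mem_univ i)

/-- Row formula for `mulVec` of the milky way matrix. -/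
lemma milky_mulVec {r m : ℕ} (A : Matrix (Fin r) (Fin m) ℤ) (i : Fin m) (t : ℕ)
    (y : (Fin (t + 2) × {j : Fin m // j ≠ i}) ⊕ Unit → ℤ) (s : Fin (t + 2)) (p : Fin r) :
    (milkyMat A i t).mulVec y (s, p) =
      (∑ j : {j : Fin m // j ≠ i}, A p j.1 * y (Sum.inl (s, j))) + A p i * y (Sum.inr ()) := by
  classical
  rw [Matrix.mulVec, dotProduct, Fintype.sum_sum_type]
  congr 1
  · rw [Fintype.sum_prod_type]
    rw [Finset.sum_comm]
    refine Finset.sum_congr rfl fun j _ => ?_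
    simp [milkyMat, ite_mul, zero_mul]
  · simp [milkyMat]

end AuxLemmas

/-- **Lemma (positivity and rank of the iterated compounded matrix).** -/
theorem milkyMat_positive_and_rank {r m : ℕ} (hr : 0 < r) (hrm : r < m)
    (A : Matrix (Fin r) (Fin m) ℤ) (hApos : IsPositiveMat A) (hAab : IsAbundantMat A)
    (i : Fin m) (t : ℕ) (ht : 1 ≤ t) :
    IsPositiveMat (milkyMat A i t) ∧
      rkZ (milkyMat A i t) = rkZ A + (t + 1) * rkZ (colSub A {i}ᶜ) := by
  classical
  constructor
  · -- positivity
    constructor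
    · -- a solution with all entries positive
      obtain ⟨x, hx0, hxpos⟩ := hApos.1
      refine ⟨Sum.elim (fun q => x q.2.1) (fun _ => x i), ?_, ?_⟩
      · funext q
        obtain ⟨s, p⟩ := q
        rw [milky_mulVec]
        simp only [Sum.elim_inl, Sum.elim_inr]
        have := sum_split_ne i (fun j => A p j * x j)
        simp only [Pi.zero_apply]
        rw [this]
        exact congrFun hx0 p
      · rintro (⟨s, j⟩ | u)
        · exact hxpos j.1
        · exact hxpos i
    · -- pairwise distinguishing solutions
      rintro (⟨s₁, j₁⟩ | u₁) c₂ hne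
      · rcases c₂ with (⟨s₂, j₂⟩ | u₂)
        · by_cases hj : j₁.1 = j₂.1
          · -- same underlying column, different blocks
            have hjj : j₁ = j₂ := Subtype.ext hj
            subst hjj
            have hss : s₁ ≠ s₂ := by
              intro h; exact hne (by rw [h])
            obtain ⟨w, hw0, hwi, hwj⟩ := exists_kernel_vec A hAab i j₁.1 j₁.2
            refine ⟨Sum.elim (fun q => if q.1 = s₁ then w q.2.1 else 0) (fun _ => 0),
              ?_, ?_⟩
            · funext q
              obtain ⟨s, p⟩ := q
              rw [milky_mulVec]
              simp only [Sum.elim_inl, Sum.elim_inr, mul_zero, add_zero, Pi.zero_apply]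
              by_cases hs : s = s₁
              · subst hs
                simp only [if_pos rfl]
                have hsplit := sum_split_ne i (fun j => A p j * w j)
                have hall : ∑ j, A p j * w j = 0 := congrFun hw0 p
                rw [hall, hwi, mul_zero, add_zero] at hsplit
                exact hsplit
              · simp [hs]
            · simpa [Ne.symm hss] using hwj
          · -- different underlying columns
            obtain ⟨x, hx0, hxne⟩ := hApos.2 j₁.1 j₂.1 hj
            refine ⟨Sum.elim (fun q => x q.2.1) (fun _ => x i), ?_, ?_⟩
            · funext q
              obtain ⟨s, p⟩ := q
              rw [milky_mulVec]
              simp only [Sum.elim_inl, Sum.elim_inr, Pi.zero_apply]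
              rw [sum_split_ne i (fun j => A p j * x j)]
              exact congrFun hx0 p
            · simpa using hxne
        · -- a block column versus the shared column
          obtain ⟨x, hx0, hxne⟩ := hApos.2 j₁.1 i j₁.2
          refine ⟨Sum.elim (fun q => x q.2.1) (fun _ => x i), ?_, ?_⟩
          · funext q
            obtain ⟨s, p⟩ := q
            rw [milky_mulVec]
            simp only [Sum.elim_inl, Sum.elim_inr, Pi.zero_apply]
            rw [sum_split_ne i (fun j => A p j * x j)]
            exact congrFun hx0 p
          · simpa using hxne
      · rcases c₂ with (⟨s₂, j₂⟩ | u₂)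
        · obtain ⟨x, hx0, hxne⟩ := hApos.2 j₂.1 i j₂.2
          refine ⟨Sum.elim (fun q => x q.2.1) (fun _ => x i), ?_, ?_⟩
          · funext q
            obtain ⟨s, p⟩ := q
            rw [milky_mulVec]
            simp only [Sum.elim_inl, Sum.elim_inr, Pi.zero_apply]
            rw [sum_split_ne i (fun j => A p j * x j)]
            exact congrFun hx0 p
          · simpa using fun h => hxne h.symm
        · exact absurd (by rfl : Sum.inr u₁ = Sum.inr u₂) (by
            cases u₁; cases u₂; exact hne)
  · -- rank computation
    classical
    set N : Matrix (Fin r) (Fin m) ℚ := A.map (Int.cast : ℤ → ℚ) with hN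
    have hiQcard : Fintype.card (Fin m) - 2 ≤ ({i}ᶜ : Finset (Fin m)).card := by
      rw [Finset.card_compl, Finset.card_singleton, Fintype.card_fin]
      omega
    have hiQ : rkZ (colSub A {i}ᶜ) = rkZ A := hAab.2 {i}ᶜ hiQcard
    set B : Matrix (Fin r) {j : Fin m // j ≠ i} ℚ := Matrix.of fun p j => N p j.1 with hB
    have hBcol : ∀ j : {j : Fin m // j ≠ i}, Bᵀ j = Nᵀ j.1 := fun j => funext fun p => rfl
    have himg : Set.range Bᵀ = Nᵀ '' ↑({i}ᶜ : Finset (Fin m)) := by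
      ext x
      constructor
      · rintro ⟨j, rfl⟩
        exact ⟨j.1, by simp [j.2], (hBcol j).symm⟩
      · rintro ⟨j, hj, rfl⟩
        exact ⟨⟨j, by simpa using hj⟩, hBcol _⟩
    set W : Submodule ℚ (Fin r → ℚ) := Submodule.span ℚ (Set.range Bᵀ) with hW
    have hNiW : Nᵀ i ∈ W := by
      rw [hW, himg]
      exact col_mem_span_of_rank_eq A {i}ᶜ hiQ i
    have hcolW : ∀ j : {j : Fin m // j ≠ i}, Bᵀ j ∈ W :=
      fun j => Submodule.subset_span ⟨j, rfl⟩
    set M : Matrix (Fin (t + 2) × Fin r) ((Fin (t + 2) × {j : Fin m // j ≠ i}) ⊕ Unit) ℚ :=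
      (milkyMat A i t).map (Int.cast : ℤ → ℚ) with hM
    have hMval : ∀ (s' : Fin (t + 2)) (p : Fin r) (c),
        M (s', p) c = ((milkyMat A i t) (s', p) c : ℚ) := fun _ _ _ => rfl
    set Ψ : (Fin (t + 2) → ↥W) →ₗ[ℚ] ((Fin (t + 2) × Fin r) → ℚ) :=
      { toFun := fun f q => (f q.1 : Fin r → ℚ) q.2
        map_add' := fun f g => funext fun q => rfl
        map_smul' := fun a f => funext fun q => rfl } with hΨ
    have hΨapp : ∀ (f : Fin (t + 2) → ↥W) (q : Fin (t + 2) × Fin r),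
        Ψ f q = (f q.1 : Fin r → ℚ) q.2 := fun f q => rfl
    have hinj : Function.Injective Ψ := by
      intro f g h
      funext s
      apply Subtype.ext
      funext p
      exact congrFun h (s, p)
    have key : Submodule.span ℚ (Set.range Mᵀ) = LinearMap.range Ψ := by
      apply le_antisymm
      · rw [Submodule.span_le]
        rintro x ⟨c, rfl⟩
        rcases c with (⟨s, j⟩ | u)
        · refine ⟨Pi.single s ⟨Bᵀ j, hcolW j⟩, ?_⟩
          funext q
          obtain ⟨s', p⟩ := q
          rw [hΨapp]
          simp only [Pi.single_apply]
          rw [Matrix.transpose_apply, hMval]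
          by_cases h : s' = s
          · subst h
            simp [milkyMat, hB, hN, Matrix.map_apply]
          · simp [milkyMat, h, Ne.symm h]
        · refine ⟨fun _ => ⟨Nᵀ i, hNiW⟩, ?_⟩
          funext q
          obtain ⟨s', p⟩ := q
          rw [hΨapp, Matrix.transpose_apply, hMval]
          simp [milkyMat, hN, Matrix.map_apply]
      · rintro x ⟨f, rfl⟩
        rw [← Finset.univ_sum_single f, map_sum]
        refine Submodule.sum_mem _ fun s _ => ?_
        set ι : (Fin r → ℚ) →ₗ[ℚ] ((Fin (t + 2) × Fin r) → ℚ) :=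
          { toFun := fun w q => if q.1 = s then w q.2 else 0
            map_add' := fun w₁ w₂ => funext fun q => by
              by_cases h : q.1 = s <;> simp [h]
            map_smul' := fun a w => funext fun q => by
              by_cases h : q.1 = s <;> simp [h] } with hι
        have hιapp : ∀ (w : Fin r → ℚ) (q : Fin (t + 2) × Fin r),
            ι w q = if q.1 = s then w q.2 else 0 := fun w q => rfl
        have hψι : Ψ (Pi.single s (f s)) = ι ((f s) : Fin r → ℚ) := by
          funext q
          rw [hΨapp, hιapp]
          simp only [Pi.single_apply]
          by_cases h : q.1 = s
          · simp [h]
          · simp [h]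
        rw [hψι]
        have hsub : ⇑ι '' Set.range Bᵀ ⊆ Set.range Mᵀ := by
          rintro x ⟨y, ⟨j, rfl⟩, rfl⟩
          refine ⟨Sum.inl (s, j), ?_⟩
          funext q
          obtain ⟨s', p⟩ := q
          rw [Matrix.transpose_apply, hMval, hιapp]
          by_cases h : s' = s
          · subst h
            simp [milkyMat, hB, hN, Matrix.map_apply]
          · simp [milkyMat, h, Ne.symm h]
        have hle : W.map ι ≤ Submodule.span ℚ (Set.range Mᵀ) := by
          rw [hW, Submodule.map_span]
          exact Submodule.span_le.2 fun x hx => Submodule.subset_span (hsub hx)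
        exact hle (Submodule.mem_map_of_mem (f s).2)
    let e : {j : Fin m // j ≠ i} ≃ {x // x ∈ ({i}ᶜ : Finset (Fin m))} :=
      { toFun := fun j => ⟨j.1, by simp [j.2]⟩
        invFun := fun k => ⟨k.1, by
          have hk := k.2
          simp only [Finset.mem_compl, Finset.mem_singleton] at hk
          exact hk⟩
        left_inv := fun j => rfl
        right_inv := fun k => rfl }
    have h4 : B = ((colSub A {i}ᶜ).map (Int.cast : ℤ → ℚ)).submatrix (Equiv.refl (Fin r)) e := by
      ext p j
      simp [hB, hN, colSub, Matrix.map_apply, Matrix.submatrix_apply, e]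
    have e1 : rkZ (milkyMat A i t) = Module.finrank ℚ (Submodule.span ℚ (Set.range Mᵀ)) := by
      unfold rkZ
      rw [← hM]
      exact Matrix.rank_eq_finrank_span_cols M
    have e2 : Module.finrank ℚ (LinearMap.range Ψ) = (t + 2) * Module.finrank ℚ ↥W := by
      rw [← (LinearEquiv.ofInjective Ψ hinj).finrank_eq]
      rw [Module.finrank_pi_fintype ℚ, Finset.sum_const, Finset.card_univ, Fintype.card_fin,
        smul_eq_mul]
    have e3 : Module.finrank ℚ ↥W = rkZ (colSub A {i}ᶜ) := by
      rw [hW]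
      change Module.finrank ℚ (Submodule.span ℚ (Set.range B.col)) = _
      rw [← Matrix.rank_eq_finrank_span_cols B, h4]
      unfold rkZ
      exact rank_submatrix_equiv _ _ _
    calc rkZ (milkyMat A i t)
        = Module.finrank ℚ (Submodule.span ℚ (Set.range Mᵀ)) := e1
      _ = Module.finrank ℚ (LinearMap.range Ψ) := by rw [key]
      _ = (t + 2) * Module.finrank ℚ ↥W := e2
      _ = (t + 2) * rkZ (colSub A {i}ᶜ) := by rw [e3]
      _ = rkZ A + (t + 1) * rkZ (colSub A {i}ᶜ) := by rw [← hiQ]; ring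
end

section
/- Let m > r be positive integers and A ∈ ℤ^{r×m}. If A is positive, then for every index i ∈ [m], rk(A^{[m]∖{i}}) = rk(A), and consequently rk(A^{Q̄}) ≥ rk(A) − |Q| + 1 for every nonempty Q ⊆ [m]. If moreover A is abundant, then rk(A^{Q̄}) ≥ rk(A) − |Q| + 2 for every Q ⊆ [m] with |Q| ≥ 2. -/
open Matrix Finset MeasureTheory ProbabilityTheory Filter Topology
open scoped BoundedContinuousFunction NNReal ENNReal

attribute [local instance] Classical.propDecidable

section RankAux
open Module Submodule

variable {r m : ℕ}

private lemma rk_colSub_span (A : Matrix (Fin r) (Fin m) ℤ) (S : Finset (Fin m)) :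
    rkZ (colSub A S) =
      Module.finrank ℚ (Submodule.span ℚ ((A.map (Int.cast : ℤ → ℚ))ᵀ '' ↑S)) := by
  classical
  set B := A.map (Int.cast : ℤ → ℚ) with hB
  have h1 : (colSub A S).map (Int.cast : ℤ → ℚ)
      = B.submatrix id (fun j : S => (j : Fin m)) := rfl
  have h2 : Set.range (B.submatrix id (fun j : S => (j : Fin m)))ᵀ = Bᵀ '' ↑S := by
    have h3 : (B.submatrix id (fun j : S => (j : Fin m)))ᵀ
        = Bᵀ ∘ (fun j : S => (j : Fin m)) := rfl
    ext v; constructor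
    · rintro ⟨j, rfl⟩; exact ⟨j, j.2, rfl⟩
    · rintro ⟨j, hj, rfl⟩; exact ⟨⟨j, hj⟩, rfl⟩
  rw [rkZ, h1, Matrix.rank_eq_finrank_span_cols, Matrix.col, h2]

private lemma rkZ_span (A : Matrix (Fin r) (Fin m) ℤ) :
    rkZ A = Module.finrank ℚ
      (Submodule.span ℚ (Set.range (A.map (Int.cast : ℤ → ℚ))ᵀ)) := by
  rw [rkZ, Matrix.rank_eq_finrank_span_cols, Matrix.col]

private lemma rk_colSub_mono (A : Matrix (Fin r) (Fin m) ℤ) {S T : Finset (Fin m)}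
    (h : S ⊆ T) : rkZ (colSub A S) ≤ rkZ (colSub A T) := by
  rw [rk_colSub_span, rk_colSub_span]
  exact Submodule.finrank_mono (Submodule.span_mono (Set.image_mono (by exact_mod_cast h)))

private lemma rk_colSub_le_rkZ (A : Matrix (Fin r) (Fin m) ℤ) (S : Finset (Fin m)) :
    rkZ (colSub A S) ≤ rkZ A := by
  rw [rk_colSub_span, rkZ_span]
  exact Submodule.finrank_mono (Submodule.span_mono (Set.image_subset_range _ _))

private lemma rk_colSub_insert (A : Matrix (Fin r) (Fin m) ℤ) (S : Finset (Fin m))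
    (i : Fin m) : rkZ (colSub A (insert i S)) ≤ rkZ (colSub A S) + 1 := by
  classical
  set B := A.map (Int.cast : ℤ → ℚ) with hB
  rw [rk_colSub_span, rk_colSub_span]
  have h1 : (Bᵀ '' ↑(insert i S) : Set (Fin r → ℚ)) = insert (Bᵀ i) (Bᵀ '' ↑S) := by
    rw [Finset.coe_insert]; exact Set.image_insert_eq
  rw [h1, Submodule.span_insert]
  refine le_trans (Submodule.finrank_add_le_finrank_add_finrank _ _) ?_
  rw [add_comm]
  gcongr
  by_cases hz : Bᵀ i = 0
  · rw [hz, Submodule.span_zero_singleton]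
    simp
  · rw [finrank_span_singleton hz]

/-- Removing one column from a positive matrix does not change the rank. -/
private lemma rk_one_removed (A : Matrix (Fin r) (Fin m) ℤ) (hApos : IsPositiveMat A)
    (i : Fin m) : rkZ (colSub A ({i} : Finset (Fin m))ᶜ) = rkZ A := by
  classical
  set B := A.map (Int.cast : ℤ → ℚ) with hB
  obtain ⟨x, hx0, hxpos⟩ := hApos.1
  set x' : Fin m → ℚ := fun j => (x j : ℚ) with hx'
  have hBx : B *ᵥ x' = 0 := by
    funext i0
    have h := RingHom.map_mulVec (Int.castRingHom ℚ) A x i0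
    rw [hx0] at h
    simp at h
    exact h.symm
  have hsum : ∑ j, x' j • Bᵀ j = 0 := by
    funext i0
    have := congrFun hBx i0
    simpa [Matrix.mulVec, dotProduct, Finset.sum_apply, mul_comm,
      Matrix.transpose_apply] using this
  set N := Submodule.span ℚ (Bᵀ '' ↑(({i} : Finset (Fin m))ᶜ)) with hN
  have hmemN : ∀ j : Fin m, j ≠ i → Bᵀ j ∈ N := by
    intro j hj
    exact Submodule.subset_span ⟨j, by simp [hj], rfl⟩
  have hiN : Bᵀ i ∈ N := by
    have hsplit : x' i • Bᵀ i + ∑ j ∈ Finset.univ.erase i, x' j • Bᵀ j = 0 := by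
      rw [Finset.add_sum_erase Finset.univ (fun j => x' j • Bᵀ j) (Finset.mem_univ i)]; exact hsum
    have hterm : x' i • Bᵀ i = -∑ j ∈ Finset.univ.erase i, x' j • Bᵀ j := by
      linear_combination (norm := module) hsplit
    have hmem : x' i • Bᵀ i ∈ N := by
      rw [hterm]
      exact N.neg_mem (Submodule.sum_mem _ fun j hj =>
        N.smul_mem _ (hmemN j (Finset.ne_of_mem_erase hj)))
    have hxne : x' i ≠ 0 := by
      simp only [hx', ne_eq, Int.cast_eq_zero]
      exact (hxpos i).ne'
    have : (x' i)⁻¹ • (x' i • Bᵀ i) ∈ N := N.smul_mem _ hmem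
    rwa [smul_smul, inv_mul_cancel₀ hxne, one_smul] at this
  refine le_antisymm (rk_colSub_le_rkZ A _) ?_
  rw [rk_colSub_span, rkZ_span]
  refine Submodule.finrank_mono (Submodule.span_le.2 ?_)
  rintro v ⟨j, rfl⟩
  by_cases hj : j = i
  · subst hj; exact hiN
  · exact hmemN j hj

private lemma rk_erase_step (A : Matrix (Fin r) (Fin m) ℤ) (Q : Finset (Fin m))
    {i : Fin m} (hi : i ∈ Q) :
    rkZ (colSub A (Q.erase i)ᶜ) ≤ rkZ (colSub A Qᶜ) + 1 := by
  classical
  have h : (Q.erase i)ᶜ = insert i Qᶜ := by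
    ext j
    simp only [Finset.mem_compl, Finset.mem_erase, Finset.mem_insert]
    by_cases hj : j = i <;> simp [hj, hi]
  rw [h]
  exact rk_colSub_insert A Qᶜ i

end RankAux

/-- **Lemma (rank after column removal for positive and abundant matrices).** -/
theorem rank_column_removal {r m : ℕ} (hr : 0 < r) (hrm : r < m)
    (A : Matrix (Fin r) (Fin m) ℤ) (hApos : IsPositiveMat A) :
    (∀ i : Fin m, rkZ (colSub A ({i} : Finset (Fin m))ᶜ) = rkZ A) ∧
    (∀ Q : Finset (Fin m), Q.Nonempty → rkZ A + 1 ≤ rkZ (colSub A Qᶜ) + Q.card) ∧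
    (IsAbundantMat A → ∀ Q : Finset (Fin m), 2 ≤ Q.card →
      rkZ A + 2 ≤ rkZ (colSub A Qᶜ) + Q.card) := by
  classical
  have hpart1 : ∀ i : Fin m, rkZ (colSub A ({i} : Finset (Fin m))ᶜ) = rkZ A :=
    rk_one_removed A hApos
  have hpart2 : ∀ n (Q : Finset (Fin m)), Q.card = n + 1 →
      rkZ A + 1 ≤ rkZ (colSub A Qᶜ) + Q.card := by
    intro n
    induction n with
    | zero =>
      intro Q hQ
      obtain ⟨i, rfl⟩ := Finset.card_eq_one.1 hQ
      rw [hpart1 i, Finset.card_singleton]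
    | succ n ih =>
      intro Q hQ
      obtain ⟨i, hi⟩ := Finset.card_pos.1 (by omega : 0 < Q.card)
      have hcard : (Q.erase i).card = n + 1 := by
        rw [Finset.card_erase_of_mem hi]; omega
      have h1 := ih (Q.erase i) hcard
      have h2 := rk_erase_step A Q hi
      omega
  refine ⟨hpart1, fun Q hQ => ?_, fun habund => ?_⟩
  · obtain ⟨n, hn⟩ : ∃ n, Q.card = n + 1 :=
      ⟨Q.card - 1, by have := Finset.card_pos.2 hQ; omega⟩
    exact hpart2 n Q hn
  · have hpart3 : ∀ n (Q : Finset (Fin m)), Q.card = n + 2 →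
        rkZ A + 2 ≤ rkZ (colSub A Qᶜ) + Q.card := by
      intro n
      induction n with
      | zero =>
        intro Q hQ
        have hcc : Fintype.card (Fin m) - 2 ≤ Qᶜ.card := by
          rw [Finset.card_compl, hQ]
        rw [habund.2 Qᶜ hcc, hQ]
      | succ n ih =>
        intro Q hQ
        obtain ⟨i, hi⟩ := Finset.card_pos.1 (by omega : 0 < Q.card)
        have hcard : (Q.erase i).card = n + 2 := by
          rw [Finset.card_erase_of_mem hi]; omega
        have h1 := ih (Q.erase i) hcard
        have h2 := rk_erase_step A Q hi
        omega
    intro Q hQ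
    obtain ⟨n, hn⟩ : ∃ n, Q.card = n + 2 := ⟨Q.card - 2, by omega⟩
    exact hpart3 n Q hn
end

section
/- Let n ≥ 1 and let S_1, …, S_k be nonempty subsets of {1,…,n}. Let τ be the minimum cardinality of a set Z ⊆ {1,…,n} intersecting every S_i. Let p ∈ [0,1], q = 1 − p, and let [n]_p be the binomial random subset of {1,…,n}. Then the probability that no S_i is entirely contained in [n]_p satisfies q^τ ≤ P( ∀ i ∈ [k], S_i ⊄ [n]_p ) ≤ (∏_{i=1}^k |S_i|) · q^τ. -/
open Matrix Finset MeasureTheory ProbabilityTheory Filter Topology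
open scoped BoundedContinuousFunction NNReal ENNReal

attribute [local instance] Classical.propDecidable

lemma bern_false (p : ℝ≥0) (hp : p ≤ 1) :
    bern p hp {false} = ((1 - p : ℝ≥0) : ℝ≥0∞) := by
  rw [bern, PMF.toMeasure_apply_singleton _ _ (measurableSet_singleton _)]
  simp [PMF.bernoulli, ENNReal.coe_sub]

instance bern_prob (p : ℝ≥0) (hp : p ≤ 1) : IsProbabilityMeasure (bern p hp) :=
  PMF.toMeasure.isProbabilityMeasure _

lemma cylinder_measure (n : ℕ) (p : ℝ≥0) (hp : p ≤ 1) (Z : Finset (Fin n)) :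
    prodBern n p hp {ω | ∀ a ∈ Z, ω a = false} = ((1 - p : ℝ≥0) : ℝ≥0∞) ^ Z.card := by
  have hset : {ω : Fin n → Bool | ∀ a ∈ Z, ω a = false} =
      Set.pi Set.univ (fun i => if i ∈ Z then ({false} : Set Bool) else Set.univ) := by
    ext ω
    simp only [Set.mem_setOf_eq, Set.mem_pi, Set.mem_univ, forall_true_left]
    constructor
    · intro h i
      by_cases hi : i ∈ Z <;> simp [hi, h i]
    · intro h a ha
      have := h a
      simpa [ha] using this
  rw [hset, prodBern, Measure.pi_pi]
  have : ∀ i : Fin n, bern p hp (if i ∈ Z then ({false} : Set Bool) else Set.univ) =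
      if i ∈ Z then ((1 - p : ℝ≥0) : ℝ≥0∞) else 1 := by
    intro i
    by_cases hi : i ∈ Z
    · simp [hi, bern_false]
    · rw [if_neg hi, if_neg hi]; exact measure_univ
  rw [Finset.prod_congr rfl (fun i _ => this i), ← Finset.prod_filter, Finset.prod_const]
  congr 1
  simp

/-- **Lemma (probability that no set of a family is fully selected, in terms of the
vertex cover number).** -/
theorem cover_number_probability_bounds (n k : ℕ) (hn : 1 ≤ n)
    (S : Fin k → Finset (Fin n)) (hS : ∀ i, (S i).Nonempty)
    (τ : ℕ)
    (hτ : IsLeast {t : ℕ | ∃ Z : Finset (Fin n), Z.card = t ∧ ∀ i, (Z ∩ S i).Nonempty} τ)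
    (p : ℝ≥0) (hp : p ≤ 1) :
    (((1 - p : ℝ≥0) : ℝ≥0∞)) ^ τ ≤
      prodBern n p hp {ω | ∀ i, ∃ a ∈ S i, ω a = false} ∧
    prodBern n p hp {ω | ∀ i, ∃ a ∈ S i, ω a = false} ≤
      (∏ i : Fin k, ((S i).card : ℝ≥0∞)) * (((1 - p : ℝ≥0) : ℝ≥0∞)) ^ τ := by
  set q : ℝ≥0∞ := ((1 - p : ℝ≥0) : ℝ≥0∞) with hq
  have hq1 : q ≤ 1 := by
    rw [hq]
    exact_mod_cast (tsub_le_self : 1 - p ≤ 1)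
  constructor
  · -- lower bound
    obtain ⟨Z, hZcard, hZcov⟩ := hτ.1
    calc q ^ τ = prodBern n p hp {ω | ∀ a ∈ Z, ω a = false} := by
          rw [cylinder_measure, hZcard]
      _ ≤ prodBern n p hp {ω | ∀ i, ∃ a ∈ S i, ω a = false} := by
          apply measure_mono
          intro ω hω i
          obtain ⟨a, haZ⟩ := hZcov i
          rw [Finset.mem_inter] at haZ
          exact ⟨a, haZ.2, hω a haZ.1⟩
  · -- upper bound
    have hsub : {ω : Fin n → Bool | ∀ i, ∃ a ∈ S i, ω a = false} ⊆
        ⋃ f ∈ Fintype.piFinset S, {ω | ∀ i, ω (f i) = false} := by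
      intro ω hω
      choose f hfS hfω using hω
      exact Set.mem_biUnion (Fintype.mem_piFinset.mpr hfS) hfω
    calc prodBern n p hp {ω | ∀ i, ∃ a ∈ S i, ω a = false}
        ≤ ∑ f ∈ Fintype.piFinset S, prodBern n p hp {ω | ∀ i, ω (f i) = false} :=
          le_trans (measure_mono hsub) (measure_biUnion_finset_le _ _)
      _ ≤ ∑ f ∈ Fintype.piFinset S, q ^ τ := by
          apply Finset.sum_le_sum
          intro f hf
          rw [Fintype.mem_piFinset] at hf
          have hset : {ω : Fin n → Bool | ∀ i, ω (f i) = false} =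
              {ω | ∀ a ∈ Finset.univ.image f, ω a = false} := by
            ext ω
            simp only [Set.mem_setOf_eq, Finset.mem_image, Finset.mem_univ, true_and]
            constructor
            · rintro h a ⟨i, rfl⟩
              exact h i
            · intro h i
              exact h (f i) ⟨i, rfl⟩
          rw [hset, cylinder_measure]
          have hτle : τ ≤ (Finset.univ.image f).card := by
            apply hτ.2
            refine ⟨Finset.univ.image f, rfl, fun i => ⟨f i, ?_⟩⟩
            rw [Finset.mem_inter]
            exact ⟨Finset.mem_image_of_mem f (Finset.mem_univ i), hf i⟩
          exact pow_le_pow_right_of_le_one' hq1 hτle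
      _ = (∏ i : Fin k, ((S i).card : ℝ≥0∞)) * q ^ τ := by
          rw [Finset.sum_const, nsmul_eq_mul]
          congr 1
          rw [Fintype.card_piFinset]
          push_cast
          rfl
end
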